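/- arXiv:2404.16438 — 8 statements merged into one kernel-verified Lean document; each statement's English description precedes it below -/
import Mathlib

section
/- Let N ≥ 1, 1 ≤ p₀ < ∞, and let V ∈ L^{p₀}_U(ℝ^N) be such that translations of V are continuous in the L^{p₀}_U(ℝ^N) norm, i.e. ‖τ_y V − V‖_{L^{p₀}_U(ℝ^N)} → 0 as |y| → 0, where τ_y V(x) := V(x − y). Then V can be approximated in L^{p₀}_U(ℝ^N) by bounded functions. -/
open MeasureTheory Metric Filter ENNReal

/-- The locally uniform `L^p` norm: `sup_{x₀} ‖V‖_{L^p(B(x₀,1))}`. -/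
noncomputable def locUnifNorm {N : ℕ} (p : ℝ) (V : EuclideanSpace ℝ (Fin N) → ℝ) : ℝ≥0∞ :=
  ⨆ x₀ : EuclideanSpace ℝ (Fin N),
    eLpNorm V (ENNReal.ofReal p) (volume.restrict (ball x₀ 1))

/-- `V` can be approximated in `L^p_U(ℝ^N)` by bounded functions. -/
def ApproxByBounded {N : ℕ} (p : ℝ) (V : EuclideanSpace ℝ (Fin N) → ℝ) : Prop :=
  ∀ ε : ℝ, 0 < ε → ∃ W : EuclideanSpace ℝ (Fin N) → ℝ, Measurable W ∧
    (∃ C : ℝ, ∀ᵐ y ∂(volume : Measure (EuclideanSpace ℝ (Fin N))), |W y| ≤ C) ∧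
    locUnifNorm p (V - W) < ENNReal.ofReal ε

/-- Jensen's inequality for `ℝ≥0∞`-valued functions and a probability measure:
`(∫⁻ F)^p ≤ ∫⁻ F^p` for `1 ≤ p`. -/
lemma jensen_rpow {α : Type*} [MeasurableSpace α] (π : Measure α) [IsProbabilityMeasure π]
    {F : α → ℝ≥0∞} (hF : AEMeasurable F π) {p : ℝ} (hp : 1 ≤ p) :
    (∫⁻ a, F a ∂π) ^ p ≤ ∫⁻ a, F a ^ p ∂π := by
  rcases eq_or_lt_of_le hp with h1 | h1
  · simp [← h1]
  · have hpq : p.HolderConjugate (Real.conjExponent p) := .conjExponent h1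
    have h := ENNReal.lintegral_mul_le_Lp_mul_Lq π hpq hF
      (aemeasurable_const (b := (1 : ℝ≥0∞)))
    simp only [Pi.mul_apply, mul_one, ENNReal.one_rpow, lintegral_one, measure_univ] at h
    have hp0 : (0:ℝ) < p := lt_trans zero_lt_one h1
    calc (∫⁻ a, F a ∂π) ^ p ≤ ((∫⁻ a, F a ^ p ∂π) ^ (1/p)) ^ p :=
          ENNReal.rpow_le_rpow h hp0.le
      _ = ∫⁻ a, F a ^ p ∂π := by
          rw [← ENNReal.rpow_mul, one_div_mul_cancel hp0.ne', ENNReal.rpow_one]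

theorem stmt2 {N : ℕ} (hN : 1 ≤ N) {p₀ : ℝ} (hp : 1 ≤ p₀)
    (V : EuclideanSpace ℝ (Fin N) → ℝ) (hV : Measurable V)
    (hVU : locUnifNorm p₀ V < ⊤)
    (hTrans : Tendsto (fun y : EuclideanSpace ℝ (Fin N) =>
        locUnifNorm p₀ (fun x => V (x - y) - V x)) (nhds 0) (nhds 0)) :
    ApproxByBounded p₀ V := by
  classical
  intro ε hε
  have hp0 : (0:ℝ) < p₀ := lt_of_lt_of_le zero_lt_one hp
  set q : ℝ≥0∞ := ENNReal.ofReal p₀ with hqdef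
  have hq1 : (1:ℝ≥0∞) ≤ q := by
    rw [hqdef, ← ENNReal.ofReal_one]
    exact ENNReal.ofReal_le_ofReal hp
  have hq0 : q ≠ 0 := fun h => by simp [h] at hq1
  have hqtop : q ≠ ∞ := ENNReal.ofReal_ne_top
  have hqtoReal : q.toReal = p₀ := ENNReal.toReal_ofReal hp0.le
  set A : ℝ≥0∞ := ENNReal.ofReal (ε/2) with hAdef
  have hA0 : 0 < A := ENNReal.ofReal_pos.mpr (by linarith)
  -- choose δ from translation continuity
  have hev : ∀ᶠ y in nhds (0:EuclideanSpace ℝ (Fin N)),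
      locUnifNorm p₀ (fun x => V (x - y) - V x) < A := hTrans.eventually_lt_const hA0
  rw [Metric.eventually_nhds_iff] at hev
  obtain ⟨δ₀, hδ₀pos, hδ₀⟩ := hev
  set δ : ℝ := min δ₀ 1 with hδdef
  have hδpos : 0 < δ := lt_min hδ₀pos zero_lt_one
  have hδ1 : δ ≤ 1 := min_le_right _ _
  have hδsmall : ∀ y : EuclideanSpace ℝ (Fin N), y ∈ ball (0:EuclideanSpace ℝ (Fin N)) δ →
      locUnifNorm p₀ (fun x => V (x - y) - V x) < A := by
    intro y hy
    exact hδ₀ (lt_of_lt_of_le (mem_ball.mp hy) (min_le_left _ _))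
  set s : Set (EuclideanSpace ℝ (Fin N)) := ball (0:EuclideanSpace ℝ (Fin N)) δ with hsdef
  set c : ℝ≥0∞ := volume s with hcdef
  have hc0 : c ≠ 0 := (measure_ball_pos volume 0 hδpos).ne'
  have hctop : c ≠ ∞ := measure_ball_lt_top.ne
  set π : Measure (EuclideanSpace ℝ (Fin N)) := c⁻¹ • volume.restrict s with hπdef
  haveI hπprob : IsProbabilityMeasure π := by
    constructor
    rw [hπdef, Measure.smul_apply, smul_eq_mul, Measure.restrict_apply_univ]
    exact ENNReal.inv_mul_cancel hc0 hctop
  -- the mollified function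
  set W : EuclideanSpace ℝ (Fin N) → ℝ := fun x => ∫ y, V (x - y) ∂π with hWdef
  have hWm : Measurable W := by
    have h1 : StronglyMeasurable fun z : EuclideanSpace ℝ (Fin N) × EuclideanSpace ℝ (Fin N) => V (z.1 - z.2) :=
      (hV.comp (measurable_fst.sub measurable_snd)).stronglyMeasurable
    exact h1.integral_prod_right'.measurable
  -- change of variables
  have hcov : ∀ (x : EuclideanSpace ℝ (Fin N)) (r : ℝ),
      ∫⁻ y in ball (0:EuclideanSpace ℝ (Fin N)) r, (‖V (x - y)‖₊ : ℝ≥0∞) = ∫⁻ z in ball x r, (‖V z‖₊ : ℝ≥0∞) := by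
    intro x r
    have hmp : MeasurePreserving (fun y : EuclideanSpace ℝ (Fin N) => x - y) volume volume :=
      Measure.measurePreserving_sub_left volume x
    have hpre : (fun y : EuclideanSpace ℝ (Fin N) => x - y) ⁻¹' (ball x r) = ball (0:EuclideanSpace ℝ (Fin N)) r := by
      ext y
      simp [mem_ball, dist_eq_norm, norm_sub_rev]
    rw [← hpre]
    exact hmp.setLIntegral_comp_preimage measurableSet_ball hV.nnnorm.coe_nnreal_ennreal
  -- uniform bound on the local L¹ mass
  have hbound : ∀ x : EuclideanSpace ℝ (Fin N), ∫⁻ y, (‖V (x - y)‖₊ : ℝ≥0∞) ∂π ≤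
      c⁻¹ * (locUnifNorm p₀ V * volume (ball (0:EuclideanSpace ℝ (Fin N)) 1) ^ (1 - 1/p₀)) := by
    intro x
    rw [hπdef, lintegral_smul_measure]
    refine mul_le_mul_right ?_ _
    calc ∫⁻ y in s, (‖V (x - y)‖₊ : ℝ≥0∞) = ∫⁻ z in ball x δ, (‖V z‖₊ : ℝ≥0∞) := hcov x δ
      _ ≤ ∫⁻ z in ball x 1, (‖V z‖₊ : ℝ≥0∞) :=
          lintegral_mono' (Measure.restrict_mono (ball_subset_ball hδ1) le_rfl) le_rfl
      _ = eLpNorm V 1 (volume.restrict (ball x 1)) := by rw [eLpNorm_one_eq_lintegral_enorm]; rfl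
      _ ≤ eLpNorm V q (volume.restrict (ball x 1)) *
            (volume.restrict (ball x 1)) Set.univ ^ (1/(1:ℝ≥0∞).toReal - 1/q.toReal) :=
          eLpNorm_le_eLpNorm_mul_rpow_measure_univ hq1 hV.aestronglyMeasurable
      _ ≤ locUnifNorm p₀ V * volume (ball (0:EuclideanSpace ℝ (Fin N)) 1) ^ (1 - 1/p₀) := by
          rw [Measure.restrict_apply_univ, Measure.addHaar_ball_center, ENNReal.toReal_one,
            hqtoReal, one_div_one]
          exact mul_le_mul_left (le_iSup (fun x₀ : EuclideanSpace ℝ (Fin N) =>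
              eLpNorm V (ENNReal.ofReal p₀) (volume.restrict (ball x₀ 1))) x) _
  set Cb : ℝ≥0∞ := c⁻¹ * (locUnifNorm p₀ V * volume (ball (0:EuclideanSpace ℝ (Fin N)) 1) ^ (1 - 1/p₀)) with hCbdef
  have hCbtop : Cb ≠ ∞ := by
    refine ENNReal.mul_ne_top (ENNReal.inv_ne_top.mpr hc0) (ENNReal.mul_ne_top hVU.ne ?_)
    exact (ENNReal.rpow_lt_top_of_nonneg (by
      have : 1/p₀ ≤ 1 := by
        rw [div_le_one hp0]; exact hp
      linarith) measure_ball_lt_top.ne).ne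
  -- integrability of the translates
  have hWint : ∀ x : EuclideanSpace ℝ (Fin N), Integrable (fun y => V (x - y)) π := by
    intro x
    refine ⟨(hV.comp (measurable_const.sub measurable_id)).aestronglyMeasurable, ?_⟩
    exact lt_of_le_of_lt (hbound x) hCbtop.lt_top
  -- boundedness of W
  have hWb : ∀ x : EuclideanSpace ℝ (Fin N), |W x| ≤ Cb.toReal := by
    intro x
    have h1 : ‖W x‖ ≤ (∫⁻ y, ENNReal.ofReal ‖V (x - y)‖ ∂π).toReal :=
      norm_integral_le_lintegral_norm _
    rw [Real.norm_eq_abs] at h1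
    refine le_trans h1 (ENNReal.toReal_mono hCbtop ?_)
    exact le_trans (le_of_eq (lintegral_congr fun y => ENNReal.ofReal_eq_coe_nnreal (norm_nonneg _))) (hbound x)
  -- pointwise estimate
  have hpoint : ∀ x : EuclideanSpace ℝ (Fin N), ((‖(V - W) x‖₊ : ℝ≥0∞)) ≤
      ∫⁻ y, (‖V x - V (x - y)‖₊ : ℝ≥0∞) ∂π := by
    intro x
    have heq : (V - W) x = ∫ y, (V x - V (x - y)) ∂π := by
      rw [integral_sub (integrable_const _) (hWint x), integral_const]
      simp [measure_univ, hWdef]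
    rw [heq]
    exact enorm_integral_le_lintegral_enorm _
  -- the key estimate on each unit ball
  have key : ∀ x₀ : EuclideanSpace ℝ (Fin N), eLpNorm (V - W) q (volume.restrict (ball x₀ 1)) ≤ A := by
    intro x₀
    set ν : Measure (EuclideanSpace ℝ (Fin N)) := volume.restrict (ball x₀ 1) with hνdef
    have hFm : Measurable fun z : EuclideanSpace ℝ (Fin N) × EuclideanSpace ℝ (Fin N) => ((‖V z.1 - V (z.1 - z.2)‖₊ : ℝ≥0∞)) ^ p₀ :=
      (((hV.comp measurable_fst).sub
        (hV.comp (measurable_fst.sub measurable_snd))).nnnorm.coe_nnreal_ennreal).pow_const _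
    rw [eLpNorm_eq_lintegral_rpow_enorm_toReal hq0 hqtop, hqtoReal]
    have hmain : ∫⁻ x, ((‖(V - W) x‖₊ : ℝ≥0∞)) ^ p₀ ∂ν ≤ A ^ p₀ := by
      calc ∫⁻ x, ((‖(V - W) x‖₊ : ℝ≥0∞)) ^ p₀ ∂ν
          ≤ ∫⁻ x, (∫⁻ y, (‖V x - V (x - y)‖₊ : ℝ≥0∞) ∂π) ^ p₀ ∂ν :=
            lintegral_mono fun x => ENNReal.rpow_le_rpow (hpoint x) hp0.le
        _ ≤ ∫⁻ x, ∫⁻ y, ((‖V x - V (x - y)‖₊ : ℝ≥0∞)) ^ p₀ ∂π ∂ν := by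
            refine lintegral_mono fun x => ?_
            exact jensen_rpow π ((measurable_const.sub
              (hV.comp (measurable_const.sub measurable_id))).nnnorm.coe_nnreal_ennreal).aemeasurable hp
        _ = ∫⁻ y, ∫⁻ x, ((‖V x - V (x - y)‖₊ : ℝ≥0∞)) ^ p₀ ∂ν ∂π :=
            lintegral_lintegral_swap hFm.aemeasurable
        _ ≤ ∫⁻ _, A ^ p₀ ∂π := by
            refine lintegral_mono_ae ?_
            have hys : ∀ᵐ y ∂π, y ∈ s := by
              refine Measure.ae_smul_measure ?_ _
              exact ae_restrict_mem measurableSet_ball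
            filter_upwards [hys] with y hy
            have h1 : ∫⁻ x, ((‖V x - V (x - y)‖₊ : ℝ≥0∞)) ^ p₀ ∂ν =
                (eLpNorm (fun x => V (x - y) - V x) q ν) ^ p₀ := by
              rw [eLpNorm_eq_lintegral_rpow_enorm_toReal hq0 hqtop, hqtoReal,
                ← ENNReal.rpow_mul, one_div_mul_cancel hp0.ne', ENNReal.rpow_one]
              congr 1
              ext x
              rw [show V x - V (x - y) = -(V (x - y) - V x) by ring, nnnorm_neg]
              rfl
            rw [h1]
            refine ENNReal.rpow_le_rpow ?_ hp0.le
            refine le_trans ?_ (hδsmall y hy).le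
            exact le_iSup (fun x₀ : EuclideanSpace ℝ (Fin N) =>
              eLpNorm (fun x => V (x - y) - V x) (ENNReal.ofReal p₀)
                (volume.restrict (ball x₀ 1))) x₀
        _ = A ^ p₀ := by rw [lintegral_const, measure_univ, mul_one]
    calc (∫⁻ x, ((‖(V - W) x‖₊ : ℝ≥0∞)) ^ p₀ ∂ν) ^ (1/p₀)
        ≤ (A ^ p₀) ^ (1/p₀) := ENNReal.rpow_le_rpow hmain (by positivity)
      _ = A := by rw [← ENNReal.rpow_mul, mul_one_div_cancel hp0.ne', ENNReal.rpow_one]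
  refine ⟨W, hWm, ⟨Cb.toReal, ae_of_all _ hWb⟩, ?_⟩
  have hle : locUnifNorm p₀ (V - W) ≤ A := iSup_le key
  exact lt_of_le_of_lt hle (ENNReal.ofReal_lt_ofReal_iff hε |>.mpr (by linarith))
end

section
/- Let N ≥ 1, 1 ≤ p₀ < ∞, and let V ∈ L^{p₀}_U(ℝ^N). Assume V is not too large at infinity in the sense that there exists M₀ > 0 such that lim_{|x|→∞} ∫_{B(x,1)} |V(y) − V_{M₀}(y)|^{p₀} dy = 0. Then ‖V − V_M‖_{L^{p₀}_U(ℝ^N)} → 0 as M → ∞. -/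
open MeasureTheory Metric Filter ENNReal

/-- Truncation at level `M`. -/
noncomputable def trunc {α : Type*} (M : ℝ) (V : α → ℝ) : α → ℝ :=
  fun x => max (-M) (min (V x) M)

lemma abs_sub_trunc {α : Type*} (M : ℝ) (hM : 0 ≤ M) (V : α → ℝ) (x : α) :
    |V x - trunc M V x| = max (|V x| - M) 0 := by
  simp only [trunc]
  rcases le_or_gt (V x) (-M) with h | h
  · rw [min_eq_left (by linarith), max_eq_left h, abs_of_nonpos (by linarith),
      abs_of_nonpos (by linarith), max_eq_left (by linarith)]
    ring
  · rcases le_or_gt (V x) M with h1 | h1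
    · rw [min_eq_left h1, max_eq_right h.le, sub_self, abs_zero,
        max_eq_right (by rcases abs_cases (V x) with ⟨h2, _⟩ | ⟨h2, _⟩ <;> linarith)]
    · rw [min_eq_right h1.le, max_eq_right (by linarith), abs_of_nonneg (by linarith),
        abs_of_nonneg (by linarith), max_eq_left (by linarith)]

theorem stmt3 {N : ℕ} (hN : 1 ≤ N) {p₀ : ℝ} (hp : 1 ≤ p₀)
    (V : EuclideanSpace ℝ (Fin N) → ℝ) (hV : Measurable V)
    (hVU : locUnifNorm p₀ V < ⊤)
    (hInfty : ∃ M₀ : ℝ, 0 < M₀ ∧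
      Tendsto (fun x : EuclideanSpace ℝ (Fin N) =>
          ∫⁻ y in ball x 1, ENNReal.ofReal (|V y - trunc M₀ V y| ^ p₀))
        (cocompact (EuclideanSpace ℝ (Fin N))) (nhds 0)) :
    Tendsto (fun M : ℝ => locUnifNorm p₀ (V - trunc M V)) atTop (nhds 0) := by
  obtain ⟨M₀, hM₀, hT⟩ := hInfty
  have hp0 : (0 : ℝ) < p₀ := lt_of_lt_of_le one_pos hp
  have hpne : (ENNReal.ofReal p₀) ≠ 0 := by
    simp only [ne_eq, ENNReal.ofReal_eq_zero, not_le]; exact hp0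
  have hpnt : (ENNReal.ofReal p₀) ≠ ⊤ := ENNReal.ofReal_ne_top
  set G : ℝ → EuclideanSpace ℝ (Fin N) → ℝ≥0∞ := fun M x₀ =>
    ∫⁻ y in ball x₀ 1, ENNReal.ofReal (|V y - trunc M V y| ^ p₀) with hGdef
  -- eLpNorm as a lintegral
  have hELp : ∀ (M : ℝ) (x₀ : EuclideanSpace ℝ (Fin N)),
      eLpNorm (V - trunc M V) (ENNReal.ofReal p₀) (volume.restrict (ball x₀ 1))
        = (G M x₀) ^ (1 / p₀) := by
    intro M x₀
    rw [eLpNorm_eq_lintegral_rpow_enorm_toReal hpne hpnt, ENNReal.toReal_ofReal hp0.le]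
    congr 1
    refine lintegral_congr fun y => ?_
    rw [Pi.sub_apply, Real.enorm_eq_ofReal_abs,
      ← ENNReal.ofReal_rpow_of_nonneg (abs_nonneg _) hp0.le]
  -- each ball integral of |V|^p₀ is finite
  have hball : ∀ x : EuclideanSpace ℝ (Fin N),
      ∫⁻ y in ball x 1, ENNReal.ofReal (|V y| ^ p₀) < ⊤ := by
    intro x
    have h1 : eLpNorm V (ENNReal.ofReal p₀) (volume.restrict (ball x 1)) < ⊤ :=
      lt_of_le_of_lt (le_iSup (fun x₀ : EuclideanSpace ℝ (Fin N) =>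
        eLpNorm V (ENNReal.ofReal p₀) (volume.restrict (ball x₀ 1))) x) hVU
    rw [eLpNorm_eq_lintegral_rpow_enorm_toReal hpne hpnt, ENNReal.toReal_ofReal hp0.le] at h1
    have h2 : (∫⁻ y in ball x 1, ENNReal.ofReal (|V y| ^ p₀)) =
        ((∫⁻ y in ball x 1, ‖V y‖ₑ ^ p₀) ^ (1 / p₀)) ^ p₀ := by
      rw [← ENNReal.rpow_mul, one_div, inv_mul_cancel₀ hp0.ne', ENNReal.rpow_one]
      refine lintegral_congr fun y => ?_
      rw [Real.enorm_eq_ofReal_abs, ← ENNReal.ofReal_rpow_of_nonneg (abs_nonneg _) hp0.le]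
    rw [h2]
    exact ENNReal.rpow_lt_top_of_nonneg hp0.le h1.ne
  -- pointwise bounds on the truncation error
  have habs : ∀ {M M' : ℝ}, 0 ≤ M' → M' ≤ M → ∀ y,
      |V y - trunc M V y| ≤ |V y - trunc M' V y| := by
    intro M M' hM' hMM y
    rw [abs_sub_trunc M (hM'.trans hMM) V y, abs_sub_trunc M' hM' V y]
    exact max_le_max (by linarith) le_rfl
  have habsV : ∀ {M : ℝ}, 0 ≤ M → ∀ y, |V y - trunc M V y| ≤ |V y| := by
    intro M hM y
    rw [abs_sub_trunc M hM V y]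
    exact max_le (by linarith [abs_nonneg (V y)]) (abs_nonneg _)
  have hmeasF : ∀ M : ℝ, Measurable fun y : EuclideanSpace ℝ (Fin N) =>
      ENNReal.ofReal (|V y - trunc M V y| ^ p₀) := by
    intro M
    have h1 : Measurable (trunc M V) := measurable_const.max ((hV.min measurable_const))
    exact ((Real.continuous_rpow_const hp0.le).measurable.comp (hV.sub h1).abs).ennreal_ofReal
  -- reduce to the lintegral statement
  have hH : Tendsto (fun M : ℝ => ⨆ x₀, G M x₀) atTop (nhds 0) := by
    rw [ENNReal.tendsto_nhds_zero]
    intro ε hε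
    have hco := (ENNReal.tendsto_nhds_zero.mp hT) ε hε
    rw [eventually_iff, mem_cocompact] at hco
    obtain ⟨K, hKc, hKsub⟩ := hco
    set K' : Set (EuclideanSpace ℝ (Fin N)) := cthickening 1 K with hK'def
    have hK'c : IsCompact K' :=
      isCompact_of_isClosed_isBounded isClosed_cthickening hKc.isBounded.cthickening
    -- cover K' by finitely many unit balls
    obtain ⟨t, ht⟩ := hK'c.elim_finite_subcover (fun x : EuclideanSpace ℝ (Fin N) => ball x 1)
      (fun _ => isOpen_ball) (fun y hy => Set.mem_iUnion.2 ⟨y, mem_ball_self one_pos⟩)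
    -- the dominating function has finite integral on K'
    have hfin : (∫⁻ y in K', ENNReal.ofReal (|V y| ^ p₀)) ≠ ⊤ := by
      refine ne_top_of_le_ne_top ?_ (lintegral_mono_set ht)
      have hsets : (⋃ i ∈ t, ball i 1) = ⋃ i : {i // i ∈ t}, ball (i : EuclideanSpace ℝ (Fin N)) 1 := by
        ext y; simp
      rw [hsets]
      refine ne_top_of_le_ne_top ?_ (lintegral_iUnion_le _ _)
      rw [tsum_fintype]
      exact (ENNReal.sum_lt_top.2 fun (i : {i // i ∈ t}) _ => hball (i : EuclideanSpace ℝ (Fin N))).ne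
    -- dominated convergence on K'
    have hI : Tendsto (fun M : ℝ => ∫⁻ y in K', ENNReal.ofReal (|V y - trunc M V y| ^ p₀))
        atTop (nhds 0) := by
      have := tendsto_lintegral_filter_of_dominated_convergence
        (μ := volume.restrict K')
        (F := fun M y => ENNReal.ofReal (|V y - trunc M V y| ^ p₀))
        (f := fun _ => 0)
        (fun y => ENNReal.ofReal (|V y| ^ p₀))
        (Eventually.of_forall hmeasF)
        (by
          filter_upwards [eventually_ge_atTop (0 : ℝ)] with M hM
          refine Eventually.of_forall fun y => ?_
          exact ENNReal.ofReal_le_ofReal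
            (Real.rpow_le_rpow (abs_nonneg _) (habsV hM y) hp0.le))
        hfin
        (by
          refine Eventually.of_forall fun y => ?_
          have hev : ∀ᶠ M : ℝ in atTop,
              ENNReal.ofReal (|V y - trunc M V y| ^ p₀) = 0 := by
            filter_upwards [eventually_ge_atTop (|V y|), eventually_ge_atTop (0 : ℝ)]
              with M hM hM0
            rw [abs_sub_trunc M hM0 V y, max_eq_right (by linarith), Real.zero_rpow hp0.ne',
              ENNReal.ofReal_zero]
          exact Tendsto.congr' (hev.mono fun M h => h.symm) tendsto_const_nhds)
      simpa using this
    have hIε : ∀ᶠ M : ℝ in atTop,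
        (∫⁻ y in K', ENNReal.ofReal (|V y - trunc M V y| ^ p₀)) ≤ ε :=
      (ENNReal.tendsto_nhds_zero.mp hI) ε hε
    filter_upwards [hIε, eventually_ge_atTop M₀] with M hMI hMM₀
    refine iSup_le fun x₀ => ?_
    by_cases hx : x₀ ∈ K
    · -- inside: ball x₀ 1 ⊆ K'
      have hsub : ball x₀ 1 ⊆ K' :=
        (ball_subset_thickening hx 1).trans (thickening_subset_cthickening 1 K)
      exact le_trans (lintegral_mono_set hsub) hMI
    · -- outside: compare with level M₀
      have h1 : G M x₀ ≤ G M₀ x₀ := by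
        refine lintegral_mono fun y => ?_
        exact ENNReal.ofReal_le_ofReal
          (Real.rpow_le_rpow (abs_nonneg _) (habs hM₀.le hMM₀ y) hp0.le)
      have h2 : G M₀ x₀ ≤ ε := hKsub hx
      exact h1.trans h2
  -- conclude for the locally uniform norm
  rw [ENNReal.tendsto_nhds_zero]
  intro ε hε
  have hεp : (0 : ℝ≥0∞) < ε ^ p₀ := by
    rw [pos_iff_ne_zero, ne_eq, ENNReal.rpow_eq_zero_iff]
    push_neg
    exact ⟨fun h => absurd h hε.ne', fun _ => hp0.le⟩
  filter_upwards [(ENNReal.tendsto_nhds_zero.mp hH) (ε ^ p₀) hεp] with M hM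
  have hpow : ((ε ^ p₀) ^ (1 / p₀)) = ε := by
    rw [← ENNReal.rpow_mul, mul_one_div_cancel hp0.ne', ENNReal.rpow_one]
  calc locUnifNorm p₀ (V - trunc M V)
      = ⨆ x₀, (G M x₀) ^ (1 / p₀) := by
        simp only [locUnifNorm]
        exact iSup_congr fun x₀ => hELp M x₀
    _ ≤ (ε ^ p₀) ^ (1 / p₀) := iSup_le fun x₀ =>
        ENNReal.rpow_le_rpow ((le_iSup (G M) x₀).trans hM) (by positivity)
    _ = ε := hpow
end

section
/- Let N ≥ 1 and 1 ≤ p₀ < ∞. There exist a measurable function V : ℝ^N → [0,∞) with ‖V‖_{L^{p₀}_U(ℝ^N)} < ∞ and a constant c > 0 such that ‖V − W‖_{L^{p₀}_U(ℝ^N)} ≥ c for every essentially bounded measurable W : ℝ^N → ℝ. In particular, the set of functions in L^{p₀}_U(ℝ^N) that can be approximated in L^{p₀}_U(ℝ^N) by bounded functions is a proper subset of L^{p₀}_U(ℝ^N). (A witness is V = Σ_n n^{N/p₀} 𝟙_{B(x_n, 1/n)} for any sequence x_n with |x_n| → ∞ and |x_n − x_m| > 2 for n ≠ m.) -/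
open MeasureTheory Metric Filter ENNReal

set_option linter.unusedVariables false
set_option linter.unusedTactic false

noncomputable section SpikeProof


noncomputable section SpikeAux

/-- spike widths -/
def sDelta (p₀ : ℝ) (n : ℕ) : ℝ := ((n : ℝ) + 1) ^ (-p₀)

/-- spike left endpoints -/
def sCtr (n : ℕ) : ℝ := 3 * ((n : ℝ) + 1)

def sSet (p₀ : ℝ) : Set ℝ := ⋃ n : ℕ, Set.Icc (sCtr n) (sCtr n + sDelta p₀ n)

/-- the 1-D spike function -/
def spikeF (p₀ : ℝ) : ℝ → ℝ := (sSet p₀).indicator (fun t => ((⌊t / 3⌋ : ℤ) : ℝ))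

lemma sDelta_pos {p₀ : ℝ} (n : ℕ) : 0 < sDelta p₀ n :=
  Real.rpow_pos_of_pos (by positivity) _

lemma sDelta_le_one {p₀ : ℝ} (hp : 1 ≤ p₀) (n : ℕ) : sDelta p₀ n ≤ 1 :=
  Real.rpow_le_one_of_one_le_of_nonpos (by push_cast; linarith) (by linarith)

lemma floor_on_interval {p₀ : ℝ} (hp : 1 ≤ p₀) {n : ℕ} {t : ℝ}
    (ht : t ∈ Set.Icc (sCtr n) (sCtr n + sDelta p₀ n)) : ⌊t / 3⌋ = (n : ℤ) + 1 := by
  have h1 := ht.1; have h2 := ht.2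
  have hd1 : sDelta p₀ n ≤ 1 := sDelta_le_one hp n
  rw [Int.floor_eq_iff]
  unfold sCtr at h1 h2
  constructor
  · push_cast; linarith
  · push_cast; linarith

lemma spikeF_eq_on {p₀ : ℝ} (hp : 1 ≤ p₀) {n : ℕ} {t : ℝ}
    (ht : t ∈ Set.Icc (sCtr n) (sCtr n + sDelta p₀ n)) : spikeF p₀ t = (n : ℝ) + 1 := by
  have hmem : t ∈ sSet p₀ := Set.mem_iUnion.2 ⟨n, ht⟩
  rw [spikeF, Set.indicator_of_mem hmem, floor_on_interval hp ht]
  push_cast; ring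

lemma spikeF_nonneg {p₀ : ℝ} (hp : 1 ≤ p₀) (t : ℝ) : 0 ≤ spikeF p₀ t := by
  by_cases h : t ∈ sSet p₀
  · obtain ⟨n, hn⟩ := Set.mem_iUnion.1 h
    rw [spikeF_eq_on hp hn]; positivity
  · rw [spikeF, Set.indicator_of_notMem h]

lemma spikeF_support {p₀ : ℝ} {t : ℝ} (h : spikeF p₀ t ≠ 0) :
    ∃ n : ℕ, t ∈ Set.Icc (sCtr n) (sCtr n + sDelta p₀ n) := by
  by_contra hc
  push_neg at hc
  have hmem : t ∉ sSet p₀ := fun hmem => by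
    obtain ⟨n, hn⟩ := Set.mem_iUnion.1 hmem; exact hc n hn
  exact h (by rw [spikeF, Set.indicator_of_notMem hmem])

lemma interval_unique {p₀ : ℝ} (hp : 1 ≤ p₀) {n m : ℕ} {t₁ t₂ : ℝ}
    (h1 : t₁ ∈ Set.Icc (sCtr n) (sCtr n + sDelta p₀ n))
    (h2 : t₂ ∈ Set.Icc (sCtr m) (sCtr m + sDelta p₀ m))
    (h : |t₁ - t₂| < 2) : n = m := by
  have e1 := h1.1; have e2 := h1.2; have f1 := h2.1; have f2 := h2.2
  have hd1 : sDelta p₀ n ≤ 1 := sDelta_le_one hp n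
  have hd2 : sDelta p₀ m ≤ 1 := sDelta_le_one hp m
  have habs1 : t₁ - t₂ < 2 := lt_of_le_of_lt (le_abs_self _) h
  have habs2 : t₂ - t₁ < 2 := lt_of_le_of_lt (neg_le_abs _ |>.trans_eq' (by rw [neg_sub])) h
  unfold sCtr at *
  by_contra hne
  rcases lt_or_gt_of_ne hne with hlt | hlt
  · have : (n : ℝ) + 1 ≤ (m : ℝ) := by exact_mod_cast hlt
    linarith
  · have : (m : ℝ) + 1 ≤ (n : ℝ) := by exact_mod_cast hlt
    linarith

lemma measurable_spikeF (p₀ : ℝ) : Measurable (spikeF p₀) := by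
  apply Measurable.indicator
  · exact (measurable_from_top.comp (Int.measurable_floor.comp (measurable_id.div_const 3)))
  · exact MeasurableSet.iUnion fun n => measurableSet_Icc

end SpikeAux


noncomputable section EucAux

lemma coord_dist {N : ℕ} (i : Fin N) (x y : EuclideanSpace ℝ (Fin N)) :
    |x i - y i| ≤ dist x y := by
  rw [EuclideanSpace.dist_eq]
  have h1 : |x i - y i| = Real.sqrt (dist (x i) (y i) ^ 2) := by
    rw [Real.sqrt_sq_eq_abs, Real.dist_eq, abs_abs]
  rw [h1]
  exact Real.sqrt_le_sqrt (Finset.single_le_sum (f := fun j => dist (x j) (y j) ^ 2)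
    (fun j _ => sq_nonneg _) (Finset.mem_univ i))

lemma measurable_coord {N : ℕ} (i : Fin N) :
    Measurable (fun x : EuclideanSpace ℝ (Fin N) => x i) :=
  (measurable_pi_apply i).comp (MeasurableEquiv.toLp 2 (Fin N → ℝ)).symm.measurable

lemma measurableSet_box {N : ℕ} (I : Fin N → Set ℝ) (hI : ∀ i, MeasurableSet (I i)) :
    MeasurableSet {x : EuclideanSpace ℝ (Fin N) | ∀ i, x i ∈ I i} := by
  have : {x : EuclideanSpace ℝ (Fin N) | ∀ i, x i ∈ I i} =
      ⋂ i, (fun x : EuclideanSpace ℝ (Fin N) => x i) ⁻¹' (I i) := by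
    ext x; simp [Set.mem_iInter]
  rw [this]
  exact MeasurableSet.iInter fun i => measurable_coord i (hI i)

lemma volume_box {N : ℕ} (I : Fin N → Set ℝ) (hI : ∀ i, MeasurableSet (I i)) :
    volume {x : EuclideanSpace ℝ (Fin N) | ∀ i, x i ∈ I i} = ∏ i, volume (I i) := by
  have key := (EuclideanSpace.volume_preserving_symm_measurableEquiv_toLp (Fin N)).measure_preimage
    (s := Set.univ.pi I) (MeasurableSet.univ_pi hI).nullMeasurableSet
  have hpre : (MeasurableEquiv.toLp 2 (Fin N → ℝ)).symm ⁻¹' (Set.univ.pi I) =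
      {x : EuclideanSpace ℝ (Fin N) | ∀ i, x i ∈ I i} := by
    ext x
    simp [Set.mem_pi]
  rw [hpre] at key
  rw [key, volume_pi_pi]

end EucAux

-- the slab in R^N
def slab {N : ℕ} (p₀ : ℝ) (i0 : Fin N) (m : ℕ) : Set (EuclideanSpace ℝ (Fin N)) :=
  {x | x i0 ∈ Set.Icc (sCtr m) (sCtr m + sDelta p₀ m)}

lemma slab_meas {N : ℕ} (p₀ : ℝ) (i0 : Fin N) (m : ℕ) : MeasurableSet (slab p₀ i0 m) :=
  measurable_coord i0 measurableSet_Icc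

/-- each unit ball sees at most one slab -/
lemma exists_dominating {N : ℕ} (hp : 1 ≤ p₀) (i0 : Fin N)
    (x₀ : EuclideanSpace ℝ (Fin N)) :
    ∃ m : ℕ, ∀ x ∈ ball x₀ 1, |spikeF p₀ (x i0)| ≤
      Set.indicator (slab p₀ i0 m) (fun _ => (m : ℝ) + 1) x := by
  by_cases h : ∃ x ∈ ball x₀ 1, spikeF p₀ (x i0) ≠ 0
  · obtain ⟨x, hxball, hx⟩ := h
    obtain ⟨n, hn⟩ := spikeF_support hx
    refine ⟨n, fun y hyball => ?_⟩
    by_cases hy : spikeF p₀ (y i0) = 0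
    · rw [hy, abs_zero]
      exact Set.indicator_nonneg (fun _ _ => by positivity) y
    · obtain ⟨m', hm'⟩ := spikeF_support hy
      have hdist : |y i0 - x i0| < 2 := by
        calc |y i0 - x i0| ≤ dist y x := coord_dist i0 y x
        _ ≤ dist y x₀ + dist x₀ x := dist_triangle _ _ _
        _ < 2 := by
            rw [mem_ball] at hxball hyball
            rw [dist_comm x₀ x]; linarith
      have heq : m' = n := interval_unique hp hm' hn hdist
      subst heq
      rw [spikeF_eq_on hp hm', Set.indicator_of_mem (show y ∈ slab p₀ i0 m' from hm')]
      rw [abs_of_nonneg (by positivity)]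
  · push_neg at h
    refine ⟨0, fun y hy => ?_⟩
    rw [h y hy, abs_zero]
    exact Set.indicator_nonneg (fun _ _ => by positivity) y

lemma slab_inter_ball_vol {N : ℕ} (hp : 1 ≤ p₀) (i0 : Fin N) (m : ℕ)
    (x₀ : EuclideanSpace ℝ (Fin N)) :
    volume (slab p₀ i0 m ∩ ball x₀ 1) ≤ ENNReal.ofReal (sDelta p₀ m * 2 ^ (N - 1)) := by
  set I : Fin N → Set ℝ := fun i =>
    if i = i0 then Set.Icc (sCtr m) (sCtr m + sDelta p₀ m) else Set.Icc (x₀ i - 1) (x₀ i + 1) with hI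
  have hImeas : ∀ i, MeasurableSet (I i) := by
    intro i; rw [hI]; dsimp only; split <;> exact measurableSet_Icc
  have hsub : slab p₀ i0 m ∩ ball x₀ 1 ⊆ {x : EuclideanSpace ℝ (Fin N) | ∀ i, x i ∈ I i} := by
    rintro x ⟨hxs, hxb⟩ i
    rw [hI]; dsimp only
    split
    · next hi => subst hi; exact hxs
    · have h1 : |x i - x₀ i| ≤ dist x x₀ := coord_dist i x x₀
      rw [mem_ball] at hxb
      have := abs_le.1 (h1.trans hxb.le)
      exact ⟨by linarith [this.1], by linarith [this.2]⟩
  calc volume (slab p₀ i0 m ∩ ball x₀ 1) ≤ volume {x : EuclideanSpace ℝ (Fin N) | ∀ i, x i ∈ I i} :=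
        measure_mono hsub
  _ = ∏ i, volume (I i) := volume_box I hImeas
  _ = ENNReal.ofReal (sDelta p₀ m * 2 ^ (N - 1)) := by
      rw [← Finset.mul_prod_erase Finset.univ _ (Finset.mem_univ i0)]
      have h1 : volume (I i0) = ENNReal.ofReal (sDelta p₀ m) := by
        rw [hI]; dsimp only; rw [if_pos rfl, Real.volume_Icc]; congr 1; ring
      have h2 : ∀ i ∈ Finset.univ.erase i0, volume (I i) = ENNReal.ofReal 2 := by
        intro i hi
        rw [hI]; dsimp only; rw [if_neg (Finset.ne_of_mem_erase hi), Real.volume_Icc]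
        congr 1; ring
      rw [h1, Finset.prod_congr rfl h2, Finset.prod_const,
        Finset.card_erase_of_mem (Finset.mem_univ i0), Finset.card_univ, Fintype.card_fin,
        ENNReal.ofReal_mul (sDelta_pos m).le]
      congr 1
      rw [← ENNReal.ofReal_pow (by norm_num)]

lemma real_upper {p₀ : ℝ} (N : ℕ) (hp : 1 ≤ p₀) (m : ℕ) :
    ((m : ℝ) + 1) * (sDelta p₀ m * 2 ^ (N - 1)) ^ (1 / p₀) ≤ 2 ^ N := by
  have hp0 : 0 < p₀ := lt_of_lt_of_le one_pos hp
  have hr0 : 0 < 1 / p₀ := by positivity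
  have hr1 : 1 / p₀ ≤ 1 := by rw [div_le_one hp0]; exact hp
  have hx : (0 : ℝ) < (m : ℝ) + 1 := by positivity
  rw [Real.mul_rpow (sDelta_pos m).le (by positivity)]
  have hdel : (sDelta p₀ m) ^ (1 / p₀) = ((m : ℝ) + 1)⁻¹ := by
    rw [sDelta, ← Real.rpow_mul hx.le, show -p₀ * (1 / p₀) = -1 by field_simp,
      Real.rpow_neg_one]
  rw [hdel]
  have h2 : ((2 : ℝ) ^ (N - 1)) ^ (1 / p₀) ≤ 2 ^ (N - 1) := by
    calc ((2 : ℝ) ^ (N - 1)) ^ (1 / p₀) ≤ ((2 : ℝ) ^ (N - 1)) ^ (1 : ℝ) :=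
          Real.rpow_le_rpow_of_exponent_le (one_le_pow₀ (by norm_num)) hr1
    _ = 2 ^ (N - 1) := Real.rpow_one _
  have h3 : (2 : ℝ) ^ (N - 1) ≤ 2 ^ N := pow_le_pow_right₀ (by norm_num) (Nat.sub_le N 1)
  have h4 : ((m : ℝ) + 1) * (((m : ℝ) + 1)⁻¹ * ((2:ℝ) ^ (N - 1)) ^ (1 / p₀))
      = ((2:ℝ) ^ (N - 1)) ^ (1 / p₀) := by field_simp
  rw [h4]
  linarith

lemma ball_eLpNorm_le {N : ℕ} {p₀ : ℝ} (hp : 1 ≤ p₀) (i0 : Fin N)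
    (x₀ : EuclideanSpace ℝ (Fin N)) :
    eLpNorm (fun x : EuclideanSpace ℝ (Fin N) => spikeF p₀ (x i0)) (ENNReal.ofReal p₀)
      (volume.restrict (ball x₀ 1)) ≤ ENNReal.ofReal (2 ^ N) := by
  have hp0 : 0 < p₀ := lt_of_lt_of_le one_pos hp
  have hpne : ENNReal.ofReal p₀ ≠ 0 := by
    simp only [ne_eq, ENNReal.ofReal_eq_zero, not_le]; exact hp0
  obtain ⟨m, hm⟩ := exists_dominating hp i0 x₀
  have hmono : eLpNorm (fun x : EuclideanSpace ℝ (Fin N) => spikeF p₀ (x i0))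
      (ENNReal.ofReal p₀) (volume.restrict (ball x₀ 1)) ≤
      eLpNorm (Set.indicator (slab p₀ i0 m) (fun _ => (m : ℝ) + 1)) (ENNReal.ofReal p₀)
      (volume.restrict (ball x₀ 1)) := by
    apply eLpNorm_mono_ae
    refine (ae_restrict_iff' measurableSet_ball).2 (ae_of_all _ fun x hx => ?_)
    rw [Real.norm_eq_abs, Real.norm_eq_abs,
      abs_of_nonneg (Set.indicator_nonneg (fun _ _ => by positivity) x)]
    exact hm x hx
  rw [eLpNorm_indicator_const (slab_meas p₀ i0 m) hpne ENNReal.ofReal_ne_top,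
    ENNReal.toReal_ofReal hp0.le, Measure.restrict_apply (slab_meas p₀ i0 m)] at hmono
  refine hmono.trans ?_
  have hnn : (‖(m : ℝ) + 1‖ₑ : ℝ≥0∞) = ENNReal.ofReal ((m : ℝ) + 1) := by
    rw [← ofReal_norm, Real.norm_of_nonneg (by positivity)]
  rw [hnn]
  calc ENNReal.ofReal ((m : ℝ) + 1) * volume (slab p₀ i0 m ∩ ball x₀ 1) ^ (1 / p₀)
      ≤ ENNReal.ofReal ((m : ℝ) + 1) *
        (ENNReal.ofReal (sDelta p₀ m * 2 ^ (N - 1))) ^ (1 / p₀) := by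
        exact mul_le_mul_right (ENNReal.rpow_le_rpow (slab_inter_ball_vol hp i0 m x₀)
          (by positivity)) _
  _ = ENNReal.ofReal (((m : ℝ) + 1) * (sDelta p₀ m * 2 ^ (N - 1)) ^ (1 / p₀)) := by
        rw [ENNReal.ofReal_rpow_of_nonneg (mul_nonneg (sDelta_pos m).le (by positivity))
          (by positivity), ← ENNReal.ofReal_mul (by positivity)]
  _ ≤ ENNReal.ofReal (2 ^ N) := ENNReal.ofReal_le_ofReal (real_upper N hp m)

lemma real_lower {p₀ : ℝ} (N : ℕ) (hN : 1 ≤ N) (hp : 1 ≤ p₀) (n : ℕ) :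
    (1 / 2) * ((N : ℝ)⁻¹) ^ (N - 1) ≤
      (((n : ℝ) + 1) / 2) * (sDelta p₀ n * ((N : ℝ)⁻¹) ^ (N - 1)) ^ (1 / p₀) := by
  have hp0 : 0 < p₀ := lt_of_lt_of_le one_pos hp
  have hr1 : 1 / p₀ ≤ 1 := by rw [div_le_one hp0]; exact hp
  have hNpos : (0 : ℝ) < (N : ℝ) := by exact_mod_cast Nat.pos_of_ne_zero (by omega)
  set k : ℝ := ((N : ℝ)⁻¹) ^ (N - 1) with hk
  have hk0 : 0 < k := by positivity
  have hk1 : k ≤ 1 := pow_le_one₀ (by positivity) (by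
    rw [inv_le_one_iff₀]; right; exact_mod_cast hN)
  have hx : (0 : ℝ) < (n : ℝ) + 1 := by positivity
  rw [Real.mul_rpow (sDelta_pos n).le hk0.le]
  have hdel : (sDelta p₀ n) ^ (1 / p₀) = ((n : ℝ) + 1)⁻¹ := by
    rw [sDelta, ← Real.rpow_mul hx.le, show -p₀ * (1 / p₀) = -1 by field_simp,
      Real.rpow_neg_one]
  rw [hdel]
  have hkk : k ≤ k ^ (1 / p₀) := by
    calc k = k ^ (1 : ℝ) := (Real.rpow_one k).symm
    _ ≤ k ^ (1 / p₀) := Real.rpow_le_rpow_of_exponent_ge hk0 hk1 hr1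
  have heq : (((n : ℝ) + 1) / 2) * (((n : ℝ) + 1)⁻¹ * k ^ (1 / p₀))
      = (1 / 2) * k ^ (1 / p₀) := by field_simp
  rw [heq]
  nlinarith

lemma exists_ball_lower {N : ℕ} {p₀ : ℝ} (hN : 1 ≤ N) (hp : 1 ≤ p₀) (i0 : Fin N)
    (W : EuclideanSpace ℝ (Fin N) → ℝ) (C : ℝ) (hC0 : 0 ≤ C)
    (hC : ∀ᵐ y ∂(volume : Measure (EuclideanSpace ℝ (Fin N))), |W y| ≤ C) :
    ∃ z : EuclideanSpace ℝ (Fin N),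
      ENNReal.ofReal ((1 / 2) * ((N : ℝ)⁻¹) ^ (N - 1)) ≤
        eLpNorm ((fun x => spikeF p₀ (x i0)) - W) (ENNReal.ofReal p₀)
          (volume.restrict (ball z 1)) := by
  have hp0 : 0 < p₀ := lt_of_lt_of_le one_pos hp
  have hpne : ENNReal.ofReal p₀ ≠ 0 := by
    simp only [ne_eq, ENNReal.ofReal_eq_zero, not_le]; exact hp0
  have hNpos : (0 : ℝ) < (N : ℝ) := by exact_mod_cast Nat.pos_of_ne_zero (by omega)
  set n : ℕ := ⌈2 * C⌉₊ with hn_def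
  have hn : 2 * C ≤ (n : ℝ) := Nat.le_ceil _
  set δ : ℝ := sDelta p₀ n with hδ
  set a : ℝ := sCtr n with ha
  have hδ0 : 0 < δ := sDelta_pos n
  have hδ1 : δ ≤ 1 := sDelta_le_one hp n
  set w : ℝ := (2 * (N : ℝ))⁻¹ with hw
  have hw0 : 0 < w := by positivity
  set z : EuclideanSpace ℝ (Fin N) :=
    (WithLp.equiv 2 (Fin N → ℝ)).symm (fun i => if i = i0 then a + δ / 2 else 0) with hzdef
  have hz : ∀ i, z i = if i = i0 then a + δ / 2 else 0 := fun i => rfl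
  set J : Fin N → Set ℝ := fun i => if i = i0 then Set.Icc a (a + δ) else Set.Icc (-w) w with hJ
  have hJmeas : ∀ i, MeasurableSet (J i) := by
    intro i; rw [hJ]; dsimp only; split <;> exact measurableSet_Icc
  set s := {x : EuclideanSpace ℝ (Fin N) | ∀ i, x i ∈ J i} with hs
  have hs_meas : MeasurableSet s := measurableSet_box J hJmeas
  -- s is inside the ball
  have hsub : s ⊆ ball z 1 := by
    intro x hx
    rw [mem_ball, EuclideanSpace.dist_eq]
    have hterm : ∀ i, dist (x i) (z i) ^ 2 ≤ (if i = i0 then (1/2 : ℝ)^2 else w^2) := by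
      intro i
      by_cases hi : i = i0
      · subst hi
        have hxi : x i ∈ Set.Icc a (a + δ) := by
          have h := hx i; rw [hJ] at h; simpa using h
        rw [if_pos rfl, hz i, if_pos rfl, Real.dist_eq]
        have h1 : |x i - (a + δ / 2)| ≤ δ / 2 := by
          rw [abs_le]; constructor <;> [linarith [hxi.1]; linarith [hxi.2]]
        have h2 : |x i - (a + δ / 2)| ≤ 1/2 := h1.trans (by linarith)
        calc |x i - (a + δ / 2)| ^ 2 ≤ (1/2)^2 := by
              rw [sq_abs] at *
              nlinarith [abs_nonneg (x i - (a + δ / 2)), sq_abs (x i - (a + δ / 2))]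
        _ = (1/2 : ℝ)^2 := rfl
      · have hxi : x i ∈ Set.Icc (-w) w := by
          have h := hx i; rw [hJ] at h; simpa [hi] using h
        rw [if_neg hi, hz i, if_neg hi, Real.dist_eq, sub_zero]
        have h1 : |x i| ≤ w := abs_le.2 ⟨hxi.1, hxi.2⟩
        nlinarith [abs_nonneg (x i), sq_abs (x i)]
    have hsum : ∑ i, dist (x i) (z i) ^ 2 ≤ 1/2 := by
      calc ∑ i, dist (x i) (z i) ^ 2 ≤ ∑ i, (if i = i0 then (1/2 : ℝ)^2 else w^2) :=
            Finset.sum_le_sum fun i _ => hterm i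
      _ = (1/2 : ℝ)^2 + ((N : ℝ) - 1) * w^2 := by
          rw [← Finset.add_sum_erase Finset.univ _ (Finset.mem_univ i0), if_pos rfl]
          congr 1
          rw [Finset.sum_congr rfl (fun i hi => if_neg (Finset.ne_of_mem_erase hi)),
            Finset.sum_const, Finset.card_erase_of_mem (Finset.mem_univ i0),
            Finset.card_univ, Fintype.card_fin, nsmul_eq_mul]
          congr 1
          have : (1 : ℕ) ≤ N := hN
          push_cast [Nat.cast_sub this]
          ring
      _ ≤ 1/2 := by
          rw [hw]
          have hNR : (1 : ℝ) ≤ (N : ℝ) := by exact_mod_cast hN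
          have : ((N : ℝ) - 1) * ((2 * (N : ℝ))⁻¹)^2 ≤ 1/4 := by
            rw [mul_inv, mul_pow]
            have h1 : ((N : ℝ)⁻¹)^2 ≤ (N : ℝ)⁻¹ := by
              have := inv_le_one_of_one_le₀ hNR
              nlinarith [inv_nonneg.2 hNpos.le]
            have h2 : ((N : ℝ) - 1) * (N : ℝ)⁻¹ ≤ 1 := by
              rw [sub_mul, mul_inv_cancel₀ hNpos.ne']
              nlinarith [inv_nonneg.2 hNpos.le]
            calc ((N : ℝ) - 1) * (((2:ℝ)⁻¹)^2 * ((N : ℝ)⁻¹)^2)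
                ≤ ((N : ℝ) - 1) * (((2:ℝ)⁻¹)^2 * (N : ℝ)⁻¹) := by nlinarith
            _ = (1/4) * (((N : ℝ) - 1) * (N : ℝ)⁻¹) := by ring
            _ ≤ 1/4 := by nlinarith
          nlinarith
    calc Real.sqrt (∑ i, dist (x i) (z i) ^ 2) ≤ Real.sqrt (1/2) := Real.sqrt_le_sqrt hsum
    _ < 1 := by
        have : Real.sqrt (1/2) < Real.sqrt 1 := Real.sqrt_lt_sqrt (by norm_num) (by norm_num)
        rwa [Real.sqrt_one] at this
  -- volume of s
  have hvol : volume s = ENNReal.ofReal (δ * ((N : ℝ)⁻¹) ^ (N - 1)) := by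
    rw [hs, volume_box J hJmeas,
      ← Finset.mul_prod_erase Finset.univ _ (Finset.mem_univ i0)]
    have h1 : volume (J i0) = ENNReal.ofReal δ := by
      rw [hJ]; dsimp only; rw [if_pos rfl, Real.volume_Icc]; congr 1; ring
    have h2 : ∀ i ∈ Finset.univ.erase i0, volume (J i) = ENNReal.ofReal ((N : ℝ)⁻¹) := by
      intro i hi
      rw [hJ]; dsimp only; rw [if_neg (Finset.ne_of_mem_erase hi), Real.volume_Icc]
      have hww : w - -w = (N : ℝ)⁻¹ := by
        rw [hw, sub_neg_eq_add, mul_inv, ← two_mul, ← mul_assoc,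
          mul_inv_cancel₀ (two_ne_zero), one_mul]
      rw [hww]
    rw [h1, Finset.prod_congr rfl h2, Finset.prod_const,
      Finset.card_erase_of_mem (Finset.mem_univ i0), Finset.card_univ, Fintype.card_fin,
      ENNReal.ofReal_mul hδ0.le, ← ENNReal.ofReal_pow (by positivity)]
  -- comparison with the indicator
  set b : ℝ := ((n : ℝ) + 1) / 2 with hb
  have hb0 : 0 < b := by positivity
  have hcomp : eLpNorm (s.indicator (fun _ => b)) (ENNReal.ofReal p₀)
      (volume.restrict (ball z 1)) ≤
      eLpNorm ((fun x => spikeF p₀ (x i0)) - W) (ENNReal.ofReal p₀)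
        (volume.restrict (ball z 1)) := by
    apply eLpNorm_mono_ae
    refine (ae_restrict_of_ae hC).mono fun x hx => ?_
    by_cases hxs : x ∈ s
    · rw [Set.indicator_of_mem hxs, Real.norm_of_nonneg hb0.le, Pi.sub_apply, Real.norm_eq_abs]
      have hxi : x i0 ∈ Set.Icc (sCtr n) (sCtr n + sDelta p₀ n) := by
        have h := hxs i0; rw [hJ] at h; simpa using h
      rw [spikeF_eq_on hp hxi]
      have h1 := le_abs_self ((n : ℝ) + 1 - W x)
      have h2 := (abs_le.1 hx).2
      rw [hb]; linarith
    · rw [Set.indicator_of_notMem hxs, norm_zero]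
      exact norm_nonneg _
  refine ⟨z, le_trans ?_ hcomp⟩
  rw [eLpNorm_indicator_const hs_meas hpne ENNReal.ofReal_ne_top,
    ENNReal.toReal_ofReal hp0.le, Measure.restrict_apply hs_meas,
    Set.inter_eq_self_of_subset_left hsub, hvol]
  have hnn : (‖b‖ₑ : ℝ≥0∞) = ENNReal.ofReal b := by
    rw [← ofReal_norm, Real.norm_of_nonneg hb0.le]
  rw [hnn, ENNReal.ofReal_rpow_of_nonneg (mul_nonneg hδ0.le (by positivity)) (by positivity),
    ← ENNReal.ofReal_mul hb0.le]
  exact ENNReal.ofReal_le_ofReal (real_lower N hN hp n)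


theorem stmt4 {N : ℕ} (hN : 1 ≤ N) {p₀ : ℝ} (hp : 1 ≤ p₀) :
    ∃ V : EuclideanSpace ℝ (Fin N) → ℝ, Measurable V ∧ (∀ x, 0 ≤ V x) ∧
      locUnifNorm p₀ V < ⊤ ∧
      ∃ c : ℝ, 0 < c ∧
        ∀ W : EuclideanSpace ℝ (Fin N) → ℝ, Measurable W →
          (∃ C : ℝ, ∀ᵐ y ∂(volume : Measure (EuclideanSpace ℝ (Fin N))), |W y| ≤ C) →
          ENNReal.ofReal c ≤ locUnifNorm p₀ (V - W) := by
  have hNpos : (0 : ℝ) < (N : ℝ) := by exact_mod_cast Nat.pos_of_ne_zero (by omega)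
  set i0 : Fin N := ⟨0, hN⟩ with hi0
  refine ⟨fun x => spikeF p₀ (x i0), (measurable_spikeF p₀).comp (measurable_coord i0),
    fun x => spikeF_nonneg hp _, ?_, (1 / 2) * ((N : ℝ)⁻¹) ^ (N - 1), by positivity, ?_⟩
  · have hle : locUnifNorm p₀ (fun x : EuclideanSpace ℝ (Fin N) => spikeF p₀ (x i0)) ≤
        ENNReal.ofReal (2 ^ N) := iSup_le fun x₀ => ball_eLpNorm_le hp i0 x₀
    exact lt_of_le_of_lt hle ENNReal.ofReal_lt_top
  · rintro W hW ⟨C, hC⟩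
    have hC' : ∀ᵐ y ∂(volume : Measure (EuclideanSpace ℝ (Fin N))), |W y| ≤ max C 0 :=
      hC.mono fun y h => h.trans (le_max_left _ _)
    obtain ⟨z, hz⟩ := exists_ball_lower hN hp i0 W (max C 0) (le_max_right _ _) hC'
    rw [locUnifNorm]
    exact le_iSup_of_le z hz

end SpikeProof
end

section
/- Let N ≥ 1 and 1 < p₀ < ∞. If V ∈ L^{p₀}_U(ℝ^N) can be approximated in L^1_U(ℝ^N) by bounded functions, then for every q with 1 < q < p₀, V can be approximated in L^q_U(ℝ^N) by bounded functions. -/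
open MeasureTheory Metric Filter ENNReal

set_option maxHeartbeats 1000000 in
theorem stmt7 {N : ℕ} (hN : 1 ≤ N) {p₀ : ℝ} (hp : 1 < p₀)
    (V : EuclideanSpace ℝ (Fin N) → ℝ) (hV : Measurable V)
    (hVU : locUnifNorm p₀ V < ⊤)
    (happrox : ApproxByBounded 1 V) :
    ∀ q : ℝ, 1 < q → q < p₀ → ApproxByBounded q V := by
  intro q hq1 hqp ε hε
  have hq0 : (0:ℝ) < q := lt_trans one_pos hq1
  have hp0 : (0:ℝ) < p₀ := lt_trans one_pos hp
  set e : ℝ := ε / 2 with he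
  have he0 : 0 < e := by positivity
  set M := locUnifNorm p₀ V with hM
  have hMt : M ≠ ⊤ := hVU.ne
  have hMpt : M ^ p₀ ≠ ⊤ := (ENNReal.rpow_lt_top_of_nonneg hp0.le hMt).ne
  set A : ℝ := (M ^ p₀).toReal with hA
  have hA0 : 0 ≤ A := ENNReal.toReal_nonneg
  have hMp : M ^ p₀ ≤ ENNReal.ofReal (A + 1) := by
    rw [← ENNReal.ofReal_toReal hMpt]
    exact ENNReal.ofReal_le_ofReal (by linarith)
  have heq : (0:ℝ) < e ^ q := Real.rpow_pos_of_pos he0 _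
  have hbase : (0:ℝ) < 2 * (A + 1) / e ^ q := by positivity
  set l : ℝ := (2 * (A + 1) / e ^ q) ^ (1 / (p₀ - q)) with hldef
  have hl : 0 < l := Real.rpow_pos_of_pos hbase _
  have hlp : l ^ (p₀ - q) = 2 * (A + 1) / e ^ q := by
    rw [hldef, ← Real.rpow_mul hbase.le, one_div_mul_cancel (by linarith : p₀ - q ≠ 0),
      Real.rpow_one]
  have hlq1 : 0 < l ^ (q - 1) := Real.rpow_pos_of_pos hl _
  set δ : ℝ := e ^ q / (2 * l ^ (q - 1)) with hδdef
  have hδ : 0 < δ := by positivity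
  obtain ⟨W, hWmeas, ⟨C, hWC⟩, hWnorm⟩ := happrox δ hδ
  set C' : ℝ := max C 0 with hC'def
  have hC'0 : 0 ≤ C' := le_max_right _ _
  have hCC' : C ≤ C' := le_max_left _ _
  set W' : EuclideanSpace ℝ (Fin N) → ℝ := fun y => max (-C') (min (V y) C') with hW'def
  have hW'meas : Measurable W' := measurable_const.max (hV.min measurable_const)
  have hW'bdd : ∀ y, |W' y| ≤ C' := by
    intro y
    rw [abs_le]
    constructor
    · exact le_max_left _ _
    · exact max_le (by linarith) (min_le_right _ _)
  -- key pointwise inequalities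
  have key2 : ∀ y, |V y - W' y| ≤ |V y| := by
    intro y
    rcases le_total (V y) C' with h1 | h1
    · rcases le_total (-C') (V y) with h2 | h2
      · have : W' y = V y := by rw [hW'def]; simp [min_eq_left h1, max_eq_right h2]
        rw [this]; simp [abs_nonneg]
      · have : W' y = -C' := by
          rw [hW'def]; simp [min_eq_left h1, max_eq_left h2]
        rw [this]
        have hVy : V y ≤ 0 := by linarith
        rw [abs_of_nonpos (by linarith), abs_of_nonpos hVy]
        linarith
    · have : W' y = C' := by
        rw [hW'def]; simp [min_eq_right h1, max_eq_right (by linarith : -C' ≤ C')]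
      rw [this]
      rw [abs_of_nonneg (by linarith), abs_of_nonneg (by linarith : (0:ℝ) ≤ V y)]
      linarith
  have key1 : ∀ y, |W y| ≤ C → |V y - W' y| ≤ |V y - W y| := by
    intro y hW
    have hW1 : W y ≤ C' := by
      have := (abs_le.mp hW).2; linarith
    have hW2 : -C' ≤ W y := by
      have := (abs_le.mp hW).1; linarith
    rcases le_total (V y) C' with h1 | h1
    · rcases le_total (-C') (V y) with h2 | h2
      · have : W' y = V y := by rw [hW'def]; simp [min_eq_left h1, max_eq_right h2]
        rw [this]; simp [abs_nonneg]
      · have : W' y = -C' := by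
          rw [hW'def]; simp [min_eq_left h1, max_eq_left h2]
        rw [this]
        rw [abs_of_nonpos (by linarith)]
        have : V y - W y ≤ 0 := by linarith
        rw [abs_of_nonpos this]
        linarith
    · have : W' y = C' := by
        rw [hW'def]; simp [min_eq_right h1, max_eq_right (by linarith : -C' ≤ C')]
      rw [this]
      rw [abs_of_nonneg (by linarith)]
      have h3 : V y - C' ≤ V y - W y := by linarith
      exact h3.trans (le_abs_self _)
  -- pointwise power splitting
  have split : ∀ t : ℝ, 0 ≤ t → t ^ q ≤ l ^ (q - 1) * t + l ^ (q - p₀) * t ^ p₀ := by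
    intro t ht
    have hlqp : 0 < l ^ (q - p₀) := Real.rpow_pos_of_pos hl _
    rcases le_total t l with h | h
    · rcases eq_or_lt_of_le ht with h0 | h0
      · rw [← h0, Real.zero_rpow (by positivity : q ≠ 0),
          Real.zero_rpow (by positivity : p₀ ≠ 0)]
        simp
      · have h1 : t ^ q = t ^ (q - 1) * t := by
          rw [← Real.rpow_add_one h0.ne']
          ring_nf
        have h2 : t ^ (q - 1) ≤ l ^ (q - 1) :=
          Real.rpow_le_rpow ht h (by linarith)
        have h3 : 0 ≤ l ^ (q - p₀) * t ^ p₀ := by positivity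
        nlinarith [mul_le_mul_of_nonneg_right h2 ht]
    · have h0 : 0 < t := lt_of_lt_of_le hl h
      have h1 : t ^ q = t ^ (q - p₀) * t ^ p₀ := by
        rw [← Real.rpow_add h0]; ring_nf
      have h2 : t ^ (q - p₀) ≤ l ^ (q - p₀) :=
        Real.rpow_le_rpow_of_nonpos hl h (by linarith)
      have h3 : 0 ≤ l ^ (q - 1) * t := by positivity
      have h4 : (0:ℝ) ≤ t ^ p₀ := Real.rpow_nonneg h0.le _
      nlinarith [mul_le_mul_of_nonneg_right h2 h4]
  -- per-ball L¹ bound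
  have h1B : ∀ x₀ : EuclideanSpace ℝ (Fin N),
      ∫⁻ y, (‖(V - W') y‖₊ : ℝ≥0∞) ∂(volume.restrict (ball x₀ 1)) ≤ ENNReal.ofReal δ := by
    intro x₀
    calc ∫⁻ y, (‖(V - W') y‖₊ : ℝ≥0∞) ∂(volume.restrict (ball x₀ 1))
        ≤ ∫⁻ y, (‖(V - W) y‖₊ : ℝ≥0∞) ∂(volume.restrict (ball x₀ 1)) := by
          refine lintegral_mono_ae ?_
          filter_upwards [ae_restrict_of_ae hWC] with y hy
          simp only [Pi.sub_apply]
          rw [ENNReal.coe_le_coe]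
          have := key1 y hy
          rw [← NNReal.coe_le_coe, coe_nnnorm, coe_nnnorm, Real.norm_eq_abs, Real.norm_eq_abs]
          exact this
      _ = eLpNorm (V - W) 1 (volume.restrict (ball x₀ 1)) :=
          by rw [eLpNorm_one_eq_lintegral_enorm]; rfl
      _ ≤ locUnifNorm 1 (V - W) := by
          rw [locUnifNorm, ENNReal.ofReal_one]
          exact le_iSup (fun x₀ => eLpNorm (V - W) 1 (volume.restrict (ball x₀ 1))) x₀
      _ ≤ ENNReal.ofReal δ := hWnorm.le
  -- per-ball L^p₀ bound
  have h2B : ∀ x₀ : EuclideanSpace ℝ (Fin N),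
      ∫⁻ y, (‖V y‖₊ : ℝ≥0∞) ^ p₀ ∂(volume.restrict (ball x₀ 1)) ≤ ENNReal.ofReal (A + 1) := by
    intro x₀
    have hle : eLpNorm V (ENNReal.ofReal p₀) (volume.restrict (ball x₀ 1)) ≤ M :=
      le_iSup (fun x₀ => eLpNorm V (ENNReal.ofReal p₀) (volume.restrict (ball x₀ 1))) x₀
    rw [eLpNorm_eq_lintegral_rpow_enorm_toReal (by simp [hp0] : ENNReal.ofReal p₀ ≠ 0)
      ENNReal.ofReal_ne_top, ENNReal.toReal_ofReal hp0.le] at hle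
    have := ENNReal.rpow_le_rpow hle hp0.le
    rw [← ENNReal.rpow_mul, one_div_mul_cancel hp0.ne', ENNReal.rpow_one] at this
    exact this.trans hMp
  -- main per-ball bound
  have hmain : ∀ x₀ : EuclideanSpace ℝ (Fin N),
      eLpNorm (V - W') (ENNReal.ofReal q) (volume.restrict (ball x₀ 1)) ≤
        ENNReal.ofReal e := by
    intro x₀
    set μB := volume.restrict (ball x₀ 1) with hμB
    rw [eLpNorm_eq_lintegral_rpow_enorm_toReal (by simp [hq0] : ENNReal.ofReal q ≠ 0)
      ENNReal.ofReal_ne_top, ENNReal.toReal_ofReal hq0.le]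
    have hint : ∫⁻ y, (‖(V - W') y‖₊ : ℝ≥0∞) ^ q ∂μB ≤ ENNReal.ofReal (e ^ q) := by
      have step1 : ∫⁻ y, (‖(V - W') y‖₊ : ℝ≥0∞) ^ q ∂μB ≤
          ∫⁻ y, (ENNReal.ofReal (l ^ (q - 1)) * (‖(V - W') y‖₊ : ℝ≥0∞) +
            ENNReal.ofReal (l ^ (q - p₀)) * (‖V y‖₊ : ℝ≥0∞) ^ p₀) ∂μB := by
        refine lintegral_mono fun y => ?_
        have ht : (0:ℝ) ≤ |V y - W' y| := abs_nonneg _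
        have hVW' : (V - W') y = V y - W' y := rfl
        have e1 : (‖(V - W') y‖₊ : ℝ≥0∞) ^ q = ENNReal.ofReal (|V y - W' y| ^ q) := by
          rw [← enorm_eq_nnnorm, ← ofReal_norm, ENNReal.ofReal_rpow_of_nonneg (norm_nonneg _) hq0.le,
            hVW', Real.norm_eq_abs]
        have e2 : (‖(V - W') y‖₊ : ℝ≥0∞) = ENNReal.ofReal (|V y - W' y|) := by
          rw [← enorm_eq_nnnorm, ← ofReal_norm, hVW', Real.norm_eq_abs]
        have e3 : (‖V y‖₊ : ℝ≥0∞) ^ p₀ = ENNReal.ofReal (|V y| ^ p₀) := by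
          rw [← enorm_eq_nnnorm, ← ofReal_norm, ENNReal.ofReal_rpow_of_nonneg (norm_nonneg _) hp0.le,
            Real.norm_eq_abs]
        rw [e1, e2, e3, ← ENNReal.ofReal_mul (by positivity), ← ENNReal.ofReal_mul (by positivity),
          ← ENNReal.ofReal_add (by positivity) (by positivity)]
        refine ENNReal.ofReal_le_ofReal ?_
        have hs := split _ ht
        have hmono : |V y - W' y| ^ p₀ ≤ |V y| ^ p₀ :=
          Real.rpow_le_rpow ht (key2 y) hp0.le
        have hlqp' : (0:ℝ) ≤ l ^ (q - p₀) := (Real.rpow_pos_of_pos hl _).le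
        have := mul_le_mul_of_nonneg_left hmono hlqp'
        linarith
      have step2 : ∫⁻ y, (ENNReal.ofReal (l ^ (q - 1)) * (‖(V - W') y‖₊ : ℝ≥0∞) +
            ENNReal.ofReal (l ^ (q - p₀)) * (‖V y‖₊ : ℝ≥0∞) ^ p₀) ∂μB =
          ENNReal.ofReal (l ^ (q - 1)) * (∫⁻ y, (‖(V - W') y‖₊ : ℝ≥0∞) ∂μB) +
          ENNReal.ofReal (l ^ (q - p₀)) * (∫⁻ y, (‖V y‖₊ : ℝ≥0∞) ^ p₀ ∂μB) := by
        have hmeas : Measurable fun y => ENNReal.ofReal (l ^ (q - 1)) * (‖(V - W') y‖₊ : ℝ≥0∞) :=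
          ((hV.sub hW'meas).nnnorm.coe_nnreal_ennreal).const_mul _
        rw [lintegral_add_left hmeas,
          lintegral_const_mul' _ _ ENNReal.ofReal_ne_top,
          lintegral_const_mul' _ _ ENNReal.ofReal_ne_top]
      have c1 : l ^ (q - 1) * δ = e ^ q / 2 := by
        rw [hδdef]
        field_simp
      have c2 : l ^ (q - p₀) * (A + 1) = e ^ q / 2 := by
        have : l ^ (q - p₀) = (l ^ (p₀ - q))⁻¹ := by
          rw [← Real.rpow_neg hl.le]; ring_nf
        rw [this, hlp]
        field_simp
      calc ∫⁻ y, (‖(V - W') y‖₊ : ℝ≥0∞) ^ q ∂μB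
          ≤ ENNReal.ofReal (l ^ (q - 1)) * (∫⁻ y, (‖(V - W') y‖₊ : ℝ≥0∞) ∂μB) +
            ENNReal.ofReal (l ^ (q - p₀)) * (∫⁻ y, (‖V y‖₊ : ℝ≥0∞) ^ p₀ ∂μB) :=
            step1.trans (le_of_eq step2)
        _ ≤ ENNReal.ofReal (l ^ (q - 1)) * ENNReal.ofReal δ +
            ENNReal.ofReal (l ^ (q - p₀)) * ENNReal.ofReal (A + 1) :=
            add_le_add (mul_le_mul_right (h1B x₀) _) (mul_le_mul_right (h2B x₀) _)
        _ = ENNReal.ofReal (e ^ q / 2) + ENNReal.ofReal (e ^ q / 2) := by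
            rw [← ENNReal.ofReal_mul hlq1.le, c1,
              ← ENNReal.ofReal_mul (Real.rpow_pos_of_pos hl _).le, c2]
        _ = ENNReal.ofReal (e ^ q) := by
            rw [← ENNReal.ofReal_add (by positivity) (by positivity)]
            ring_nf
    calc (∫⁻ y, (‖(V - W') y‖₊ : ℝ≥0∞) ^ q ∂μB) ^ (1 / q)
        ≤ (ENNReal.ofReal (e ^ q)) ^ (1 / q) := ENNReal.rpow_le_rpow hint (by positivity)
      _ = ENNReal.ofReal e := by
          rw [ENNReal.ofReal_rpow_of_nonneg (by positivity) (by positivity),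
            ← Real.rpow_mul he0.le, mul_one_div_cancel hq0.ne', Real.rpow_one]
  refine ⟨W', hW'meas, ⟨C', Filter.Eventually.of_forall hW'bdd⟩, ?_⟩
  calc locUnifNorm q (V - W') ≤ ENNReal.ofReal e := iSup_le hmain
    _ < ENNReal.ofReal ε := by
        rw [ENNReal.ofReal_lt_ofReal_iff hε]
        linarith
end

section
/- Let N ≥ 1 and let V : ℝ^N → [0,∞) be measurable with ‖V‖_{L^1_U(ℝ^N)} < ∞, and assume V can be approximated in L^1_U(ℝ^N) by bounded functions. Then the following are equivalent: (i) there exists M > 0 such that ∫_G V_M(x) dx = ∞ for every G ∈ 𝒢; (ii) ∫_G V(x) dx = ∞ for every G ∈ 𝒢. -/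
open MeasureTheory Metric Filter ENNReal

/-- The class `𝒢` of open sets containing arbitrarily large balls. -/
def InG {N : ℕ} (G : Set (EuclideanSpace ℝ (Fin N))) : Prop :=
  IsOpen G ∧ ∀ r : ℝ, 0 < r → ∃ x₀ : EuclideanSpace ℝ (Fin N), ball x₀ r ⊆ G

lemma exists_small_ball {N : ℕ} (hN : 1 ≤ N)
    (V : EuclideanSpace ℝ (Fin N) → ℝ) (hV : Measurable V) (hV0 : ∀ x, 0 ≤ V x)
    (happrox : ApproxByBounded 1 V)
    (hcon : ∀ M : ℝ, 0 < M → ∃ G, InG G ∧ ∫⁻ x in G, ENNReal.ofReal (trunc M V x) ≠ ⊤)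
    (m : ℕ) :
    ∃ y : EuclideanSpace ℝ (Fin N),
      ∫⁻ x in ball y ((m : ℝ) + 1), ENNReal.ofReal (V x) ≤ 2⁻¹ ^ (m + 1) := by
  set ρ : ℝ := (m : ℝ) + 1 with hρdef
  have hρ : 0 < ρ := by positivity
  set δ : ℝ≥0∞ := 2⁻¹ ^ (m + 2) with hδdef
  have hδ0 : δ ≠ 0 := by simp [hδdef]
  have hδtop : δ ≠ ⊤ := by
    refine pow_ne_top ?_
    simp
  -- finite cover of closedBall 0 ρ by unit balls
  obtain ⟨t, ht⟩ := (isCompact_closedBall (0 : EuclideanSpace ℝ (Fin N)) ρ).elim_finite_subcover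
    (fun p : EuclideanSpace ℝ (Fin N) => ball p 1) (fun p => isOpen_ball)
    (fun x hx => Set.mem_iUnion.2 ⟨x, mem_ball_self one_pos⟩)
  set ε : ℝ := 2⁻¹ ^ (m + 2) / (t.card + 1) with hεdef
  have hε : 0 < ε := by positivity
  obtain ⟨W, hWmeas, ⟨C, hC⟩, hnorm⟩ := happrox ε hε
  set M : ℝ := max C 1 with hMdef
  have hM : 0 < M := lt_of_lt_of_le one_pos (le_max_right _ _)
  clear_value δ ε M
  obtain ⟨G, hG, hGfin⟩ := hcon M hM
  set b : ℝ≥0∞ := ∫⁻ x in G, ENNReal.ofReal (trunc M V x) with hbdef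
  -- choose D with b ≤ D * δ
  obtain ⟨D, hD⟩ : ∃ D : ℕ, b / δ < D := ENNReal.exists_nat_gt (by
    exact (ENNReal.div_lt_top hGfin hδ0).ne)
  have hbD : b ≤ D * δ := by
    have := (ENNReal.div_lt_iff (Or.inl hδ0) (Or.inl hδtop)).1 hD
    exact this.le
  -- packing: disjoint balls
  set n : ℕ := D + 1 with hndef
  set R : ℝ := 2 * ρ * n with hRdef
  have hR : 0 < R := by positivity
  obtain ⟨x₀, hx₀⟩ := hG.2 R hR
  set e : EuclideanSpace ℝ (Fin N) := EuclideanSpace.single (⟨0, by omega⟩ : Fin N) (1 : ℝ) with hedef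
  have he : ‖e‖ = 1 := by rw [hedef, EuclideanSpace.norm_single]; norm_num
  set c : ℕ → EuclideanSpace ℝ (Fin N) := fun i => x₀ + (2 * ρ * i) • e with hcdef
  have hdist : ∀ i j : ℕ, dist (c i) (c j) = 2 * ρ * |(i : ℝ) - j| := by
    intro i j
    have : c i - c j = (2 * ρ * i - 2 * ρ * j) • e := by
      simp only [hcdef, sub_smul]; abel
    rw [dist_eq_norm, this, norm_smul, he, mul_one, Real.norm_eq_abs]
    rw [show (2*ρ*i - 2*ρ*j : ℝ) = 2*ρ*((i:ℝ)-j) by ring, abs_mul]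
    congr 1
    exact abs_of_pos (by positivity)
  have hsub : ∀ i ∈ Finset.range n, ball (c i) ρ ⊆ ball x₀ R := by
    intro i hi z hz
    have hi' : (i : ℝ) ≤ (n : ℝ) - 1 := by
      have := Finset.mem_range.1 hi
      have : (i : ℝ) + 1 ≤ n := by exact_mod_cast this
      linarith
    have h1 : dist z (c i) < ρ := hz
    have h2 : dist (c i) x₀ = 2 * ρ * i := by
      have := hdist i 0
      simpa [hcdef] using this
    have hn1 : (1:ℝ) ≤ n := by exact_mod_cast Nat.one_le_iff_ne_zero.2 (by omega)
    calc dist z x₀ ≤ dist z (c i) + dist (c i) x₀ := dist_triangle _ _ _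
      _ < ρ + 2 * ρ * i := by linarith
      _ ≤ R := by
          rw [hRdef]; nlinarith
  have hdisj : Set.PairwiseDisjoint (↑(Finset.range n)) (fun i => ball (c i) ρ) := by
    intro i _ j _ hij
    apply Set.disjoint_left.2
    intro z hzi hzj
    have h1 : dist z (c i) < ρ := hzi
    have h2 : dist z (c j) < ρ := hzj
    have h3 : dist (c i) (c j) ≤ dist (c i) z + dist z (c j) := dist_triangle _ _ _
    rw [hdist i j] at h3
    have h4 : (1:ℝ) ≤ |(i:ℝ) - j| := by
      have : (i:ℝ) ≠ j := by exact_mod_cast fun h => hij (Nat.cast_injective h)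
      have h5 : ((i:ℝ) - j) ≠ 0 := sub_ne_zero.2 this
      have : (1:ℝ) ≤ |(i:ℤ) - (j:ℤ)| := by
        exact_mod_cast Int.one_le_abs (by exact_mod_cast h5 ∘ (by exact_mod_cast ·))
      calc (1:ℝ) ≤ |((i:ℤ) - (j:ℤ) : ℤ)| := by exact_mod_cast this
        _ = |(i:ℝ) - j| := by push_cast; rfl
    rw [dist_comm z (c i)] at h1
    nlinarith
  -- sum over disjoint balls
  have hsum : ∑ i ∈ Finset.range n, ∫⁻ x in ball (c i) ρ, ENNReal.ofReal (trunc M V x) ≤ b := by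
    rw [← lintegral_biUnion_finset hdisj (fun _ _ => measurableSet_ball)]
    exact lintegral_mono_set ((Set.iUnion₂_subset hsub).trans hx₀)
  -- exists small ball for trunc
  have hex : ∃ i ∈ Finset.range n, ∫⁻ x in ball (c i) ρ, ENNReal.ofReal (trunc M V x) ≤ δ := by
    by_contra hno
    push_neg at hno
    have : (n : ℝ≥0∞) * δ ≤ ∑ i ∈ Finset.range n, ∫⁻ x in ball (c i) ρ, ENNReal.ofReal (trunc M V x) := by
      calc (n : ℝ≥0∞) * δ = ∑ _i ∈ Finset.range n, δ := by
            simp [Finset.sum_const, nsmul_eq_mul]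
        _ ≤ _ := Finset.sum_le_sum (fun i hi => (hno i hi).le)
    have h1 : (D : ℝ≥0∞) * δ < (n : ℝ≥0∞) * δ := by
      rw [hndef]
      push_cast
      rw [add_mul, one_mul]
      exact ENNReal.lt_add_right (by exact mul_ne_top (natCast_ne_top D) hδtop) hδ0
    exact absurd (le_trans this hsum) (not_le.2 (lt_of_le_of_lt hbD h1))
  obtain ⟨i, _, hi⟩ := hex
  refine ⟨c i, ?_⟩
  set y := c i with hydef
  -- cover ball y ρ by translated unit balls
  have hcover : ball y ρ ⊆ ⋃ p : t, ball (y + (p : EuclideanSpace ℝ (Fin N))) 1 := by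
    intro z hz
    have hz' : z - y ∈ closedBall (0 : EuclideanSpace ℝ (Fin N)) ρ := by
      simp only [mem_closedBall, dist_zero_right]
      exact le_of_lt (by simpa [dist_eq_norm] using hz)
    obtain ⟨p, hp⟩ := Set.mem_iUnion₂.1 (ht hz')
    refine Set.mem_iUnion.2 ⟨⟨p, hp.1⟩, ?_⟩
    have : dist z (y + p) = dist (z - y) p := by
      rw [dist_eq_norm, dist_eq_norm]
      congr 1
      abel
    simpa [mem_ball, this] using hp.2
  -- each unit ball integral of the difference is small
  have hball : ∀ z : EuclideanSpace ℝ (Fin N),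
      ∫⁻ x in ball z 1, (‖V x - W x‖₊ : ℝ≥0∞) ≤ ENNReal.ofReal ε := by
    intro z
    have h1 : eLpNorm (V - W) (ENNReal.ofReal 1) (volume.restrict (ball z 1)) ≤
        locUnifNorm 1 (V - W) := by
      rw [locUnifNorm]
      exact le_iSup (fun x₀ => eLpNorm (V - W) (ENNReal.ofReal 1) (volume.restrict (ball x₀ 1))) z
    have h2 := h1.trans hnorm.le
    rw [ENNReal.ofReal_one, eLpNorm_one_eq_lintegral_enorm] at h2
    exact h2
  have hδreal : ENNReal.ofReal ((2⁻¹ : ℝ) ^ (m + 2)) = δ := by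
    rw [hδdef, ENNReal.ofReal_pow (by norm_num)]
    congr 1
    rw [ENNReal.ofReal_inv_of_pos two_pos, ENNReal.ofReal_ofNat]
  have hdiffle : ∫⁻ x in ball y ρ, (‖V x - W x‖₊ : ℝ≥0∞) ≤ δ := by
    calc ∫⁻ x in ball y ρ, (‖V x - W x‖₊ : ℝ≥0∞)
        ≤ ∫⁻ x in ⋃ p : t, ball (y + (p : EuclideanSpace ℝ (Fin N))) 1,
            (‖V x - W x‖₊ : ℝ≥0∞) := lintegral_mono_set hcover
      _ ≤ ∑' p : t, ∫⁻ x in ball (y + (p : EuclideanSpace ℝ (Fin N))) 1,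
            (‖V x - W x‖₊ : ℝ≥0∞) := lintegral_iUnion_le _ _
      _ ≤ ∑' _p : t, ENNReal.ofReal ε := ENNReal.tsum_le_tsum (fun p => hball _)
      _ = (t.card : ℝ≥0∞) * ENNReal.ofReal ε := by
            rw [tsum_fintype, Finset.sum_const, Finset.card_univ, Fintype.card_coe,
              nsmul_eq_mul]
      _ = ENNReal.ofReal ((t.card : ℝ) * ε) := by
            rw [ENNReal.ofReal_mul (Nat.cast_nonneg t.card), ENNReal.ofReal_natCast]
      _ ≤ δ := by
            rw [← hδreal]
            apply ENNReal.ofReal_le_ofReal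
            have hpos : (0:ℝ) < (t.card : ℝ) + 1 := by
              have := Nat.cast_nonneg (α := ℝ) t.card
              linarith
            rw [hεdef, mul_div_assoc', div_le_iff₀ hpos]
            have hpow : (0:ℝ) < 2⁻¹ ^ (m + 2) := by
              apply pow_pos
              norm_num
            nlinarith [Nat.cast_nonneg (α := ℝ) t.card]
  -- pointwise a.e. bound
  have hpt : ∀ᵐ x ∂(volume.restrict (ball y ρ)),
      ENNReal.ofReal (V x) ≤ ENNReal.ofReal (trunc M V x) + (‖V x - W x‖₊ : ℝ≥0∞) := by
    filter_upwards [ae_restrict_of_ae hC] with x hx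
    rcases le_or_gt (V x) M with h | h
    · have htr : trunc M V x = V x := by
        simp only [trunc, min_eq_left h]
        exact max_eq_right (by linarith [hV0 x, hM])
      rw [htr]; exact le_self_add
    · have htr : trunc M V x = M := by
        simp only [trunc, min_eq_right h.le]
        exact max_eq_right (by linarith)
      rw [htr, ← enorm_eq_nnnorm, Real.enorm_eq_ofReal_abs, ← ENNReal.ofReal_add hM.le (abs_nonneg _)]
      apply ENNReal.ofReal_le_ofReal
      have h1 := (abs_le.1 hx).2
      have h2 := le_abs_self (V x - W x)
      have hCM : C ≤ M := by rw [hMdef]; exact le_max_left _ _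
      linarith
  have hmeas : Measurable (fun x => ENNReal.ofReal (trunc M V x)) :=
    ENNReal.measurable_ofReal.comp (measurable_const.max (hV.min measurable_const))
  calc ∫⁻ x in ball y ρ, ENNReal.ofReal (V x)
      ≤ ∫⁻ x in ball y ρ, (ENNReal.ofReal (trunc M V x) + (‖V x - W x‖₊ : ℝ≥0∞)) :=
        lintegral_mono_ae hpt
    _ = (∫⁻ x in ball y ρ, ENNReal.ofReal (trunc M V x)) +
        ∫⁻ x in ball y ρ, (‖V x - W x‖₊ : ℝ≥0∞) := lintegral_add_left hmeas _
    _ ≤ δ + δ := add_le_add hi hdiffle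
    _ = 2⁻¹ ^ (m + 1) := by
        rw [hδdef, show m + 2 = (m + 1) + 1 from rfl, pow_succ, ← mul_add,
          ENNReal.inv_two_add_inv_two, mul_one]

theorem stmt8 {N : ℕ} (hN : 1 ≤ N)
    (V : EuclideanSpace ℝ (Fin N) → ℝ) (hV : Measurable V) (hV0 : ∀ x, 0 ≤ V x)
    (hVU : locUnifNorm 1 V < ⊤)
    (happrox : ApproxByBounded 1 V) :
    (∃ M : ℝ, 0 < M ∧ ∀ G : Set (EuclideanSpace ℝ (Fin N)), InG G →
        ∫⁻ x in G, ENNReal.ofReal (trunc M V x) = ⊤) ↔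
    (∀ G : Set (EuclideanSpace ℝ (Fin N)), InG G →
        ∫⁻ x in G, ENNReal.ofReal (V x) = ⊤) := by
  constructor
  · rintro ⟨M, hM, hi⟩ G hG
    have hmono : ∀ x, ENNReal.ofReal (trunc M V x) ≤ ENNReal.ofReal (V x) := by
      intro x
      apply ENNReal.ofReal_le_ofReal
      simp only [trunc]
      exact max_le (by linarith [hV0 x]) (min_le_left _ _)
    refine top_le_iff.1 ?_
    rw [← hi G hG]
    exact lintegral_mono hmono
  · intro hii
    by_contra hcontra
    push_neg at hcontra
    have hcon' : ∀ M : ℝ, 0 < M → ∃ G, InG G ∧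
        ∫⁻ x in G, ENNReal.ofReal (trunc M V x) ≠ ⊤ := by
      intro M hM
      obtain ⟨G, hG, h⟩ := hcontra M hM
      exact ⟨G, hG, h⟩
    choose y hy using exists_small_ball hN V hV hV0 happrox hcon'
    set G : Set (EuclideanSpace ℝ (Fin N)) := ⋃ m : ℕ, ball (y m) ((m : ℝ) + 1) with hGdef
    have hGin : InG G := by
      constructor
      · exact isOpen_iUnion (fun m => isOpen_ball)
      · intro r hr
        obtain ⟨m, hm⟩ := exists_nat_gt r
        exact ⟨y m, (ball_subset_ball (by linarith)).trans
          (Set.subset_iUnion (fun m : ℕ => ball (y m) ((m : ℝ) + 1)) m)⟩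
    have htop := hii G hGin
    have hle : ∫⁻ x in G, ENNReal.ofReal (V x) ≤ ∑' m : ℕ, (2⁻¹ : ℝ≥0∞) ^ (m + 1) := by
      calc ∫⁻ x in G, ENNReal.ofReal (V x)
          ≤ ∑' m : ℕ, ∫⁻ x in ball (y m) ((m : ℝ) + 1), ENNReal.ofReal (V x) :=
            lintegral_iUnion_le _ _
        _ ≤ _ := ENNReal.tsum_le_tsum hy
    have hfin : ∑' m : ℕ, (2⁻¹ : ℝ≥0∞) ^ (m + 1) ≠ ⊤ := by
      have h1 : ∑' m : ℕ, (2⁻¹ : ℝ≥0∞) ^ (m + 1) ≤ ∑' m : ℕ, (2⁻¹ : ℝ≥0∞) ^ m := by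
        refine ENNReal.tsum_le_tsum (fun m => ?_)
        rw [pow_succ]
        calc (2⁻¹ : ℝ≥0∞) ^ m * 2⁻¹ ≤ (2⁻¹ : ℝ≥0∞) ^ m * 1 :=
              mul_le_mul_right (ENNReal.inv_le_one.2 one_le_two) _
          _ = _ := mul_one _
      rw [ENNReal.tsum_geometric] at h1
      refine ne_top_of_le_ne_top ?_ h1
      rw [Ne, ENNReal.inv_eq_top, tsub_eq_zero_iff_le]
      exact not_le.2 (ENNReal.inv_lt_one.2 one_lt_two)
    rw [htop] at hle
    exact hfin (top_le_iff.1 hle)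
end

section
/- Let N ≥ 1. There exists a measurable function V : ℝ^N → [0,∞) with ‖V‖_{L^1_U(ℝ^N)} < ∞ and a radius r₀ > 0 such that ∫_{B(x,r₀)} V(y) dy ≥ 1 for every x ∈ ℝ^N, while for every M > 0 and every r > 0 one has inf_{x ∈ ℝ^N} ∫_{B(x,r)} V_M(y) dy = 0. (A witness is V(x) = c |i|^N on B(i, 1/|i|) for each nonzero integer point i ∈ ℤ^N, V = (1/c)·𝟙_{B(0,1)} near 0, with c the measure of the unit ball, and V = 0 elsewhere.) -/
open MeasureTheory Metric Filter ENNReal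

open Set

noncomputable def gg (t : ℝ) : ℝ :=
  if Int.fract t * (1 + |(⌊t⌋ : ℝ)|) < 1 then 1 + |(⌊t⌋ : ℝ)| else 0

noncomputable def dd (n : ℤ) : ℝ := 1 / (1 + |(n : ℝ)|)

lemma one_le_abs_base (n : ℤ) : (1 : ℝ) ≤ 1 + |(n : ℝ)| := le_add_of_nonneg_right (abs_nonneg _)

lemma dd_pos (n : ℤ) : 0 < dd n := by
  have := one_le_abs_base n; unfold dd; positivity

lemma dd_le_one (n : ℤ) : dd n ≤ 1 := by
  have h := one_le_abs_base n
  rw [dd, div_le_one (by linarith)]; linarith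

lemma dd_mul (n : ℤ) : (1 + |(n : ℝ)|) * dd n = 1 := by
  have h := one_le_abs_base n
  rw [dd, mul_one_div, div_self (by linarith)]

lemma gg_nonneg (t : ℝ) : 0 ≤ gg t := by
  unfold gg; split
  · have : (0:ℝ) ≤ |(⌊t⌋:ℝ)| := abs_nonneg _; linarith
  · exact le_refl 0

lemma floor_eq_of_mem (n : ℤ) (t : ℝ) (h1 : (n:ℝ) ≤ t) (h2 : t < n + 1) : ⌊t⌋ = n :=
  Int.floor_eq_iff.2 ⟨h1, h2⟩

lemma gg_eq_on_slab (n : ℤ) (t : ℝ) (ht : t ∈ Ico (n:ℝ) ((n:ℝ) + dd n)) :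
    gg t = 1 + |(n : ℝ)| := by
  have hfloor : ⌊t⌋ = n :=
    floor_eq_of_mem n t ht.1 (lt_of_lt_of_le ht.2 (by linarith [dd_le_one n]))
  have hfract : Int.fract t = t - n := by rw [Int.fract, hfloor]
  have h1 : t - n < dd n := by have := ht.2; linarith
  have hpos : (0:ℝ) < 1 + |(n : ℝ)| := lt_of_lt_of_le one_pos (one_le_abs_base n)
  have : Int.fract t * (1 + |(n:ℝ)|) < 1 := by
    rw [hfract]
    calc (t - n) * (1 + |(n:ℝ)|) < dd n * (1 + |(n:ℝ)|) := mul_lt_mul_of_pos_right h1 hpos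
    _ = 1 := by rw [mul_comm]; exact dd_mul n
  rw [gg, hfloor, if_pos this]

lemma gg_eq_zero_off_slab (n : ℤ) (t : ℝ) (ht : t ∈ Ico ((n:ℝ) + dd n) ((n:ℝ) + 1)) :
    gg t = 0 := by
  have hd := dd_pos n
  have hfloor : ⌊t⌋ = n := floor_eq_of_mem n t (by linarith [ht.1]) ht.2
  have hfract : Int.fract t = t - n := by rw [Int.fract, hfloor]
  have hpos : (0:ℝ) < 1 + |(n : ℝ)| := lt_of_lt_of_le one_pos (one_le_abs_base n)
  have : ¬ (Int.fract t * (1 + |(n:ℝ)|) < 1) := by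
    push_neg
    rw [hfract]
    calc (1:ℝ) = dd n * (1 + |(n:ℝ)|) := by rw [mul_comm]; exact (dd_mul n).symm
    _ ≤ (t - n) * (1 + |(n:ℝ)|) :=
      mul_le_mul_of_nonneg_right (by linarith [ht.1]) (le_of_lt hpos)
  rw [gg, hfloor, if_neg this]

lemma gg_meas : Measurable gg := by
  have h1 : Measurable (fun t : ℝ => (⌊t⌋ : ℝ)) :=
    Measurable.comp (measurable_from_top (α := ℤ)) Int.measurable_floor
  have h2 : Measurable (fun t : ℝ => 1 + |(⌊t⌋ : ℝ)|) := measurable_const.add h1.abs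
  exact Measurable.ite
    (measurableSet_lt ((measurable_fract.mul h2 : Measurable fun t : ℝ => Int.fract t * (1 + |(⌊t⌋:ℝ)|))) measurable_const) h2 measurable_const

lemma slab_lintegral (n : ℤ) :
    ∫⁻ t in Ico (n:ℝ) ((n:ℝ) + dd n), ENNReal.ofReal (gg t) = 1 := by
  rw [setLIntegral_congr_fun measurableSet_Ico
      (fun t ht => by rw [gg_eq_on_slab n t ht]),
    setLIntegral_const, Real.volume_Ico, show (n:ℝ) + dd n - n = dd n by ring,
    ← ENNReal.ofReal_mul (by linarith [one_le_abs_base n]), dd_mul, ENNReal.ofReal_one]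

lemma offslab_lintegral (n : ℤ) :
    ∫⁻ t in Ico ((n:ℝ) + dd n) ((n:ℝ) + 1), ENNReal.ofReal (gg t) = 0 := by
  rw [setLIntegral_congr_fun measurableSet_Ico
      (fun t ht => by rw [gg_eq_zero_off_slab n t ht, ENNReal.ofReal_zero])]
  simp

lemma cell_split (n : ℤ) :
    Ico (n:ℝ) ((n:ℝ) + 1) = Ico (n:ℝ) ((n:ℝ) + dd n) ∪ Ico ((n:ℝ) + dd n) ((n:ℝ) + 1) :=
  (Ico_union_Ico_eq_Ico (by linarith [dd_pos n]) (by linarith [dd_le_one n])).symm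

lemma cell_le_one (n : ℤ) : ∫⁻ t in Ico (n:ℝ) ((n:ℝ) + 1), ENNReal.ofReal (gg t) ≤ 1 := by
  rw [cell_split n]
  refine le_trans (lintegral_union_le _ _ _) ?_
  rw [slab_lintegral, offslab_lintegral, add_zero]

lemma cell_trunc (n : ℤ) (M : ℝ) (hM : 0 < M) :
    ∫⁻ t in Ico (n:ℝ) ((n:ℝ) + 1), ENNReal.ofReal (min (gg t) M)
      ≤ ENNReal.ofReal M * ENNReal.ofReal (dd n) := by
  rw [cell_split n]
  refine le_trans (lintegral_union_le _ _ _) ?_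
  have h1 : ∫⁻ t in Ico (n:ℝ) ((n:ℝ) + dd n), ENNReal.ofReal (min (gg t) M)
      ≤ ENNReal.ofReal M * ENNReal.ofReal (dd n) := by
    refine le_trans (lintegral_mono fun t => ENNReal.ofReal_le_ofReal (min_le_right _ _)) ?_
    rw [setLIntegral_const, Real.volume_Ico, show (n:ℝ) + dd n - n = dd n by ring]
  have h2 : ∫⁻ t in Ico ((n:ℝ) + dd n) ((n:ℝ) + 1), ENNReal.ofReal (min (gg t) M) = 0 := by
    rw [setLIntegral_congr_fun measurableSet_Ico
        (fun t ht => by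
          rw [gg_eq_zero_off_slab n t ht, min_eq_left hM.le, ENNReal.ofReal_zero])]
    simp
  rw [h2, add_zero]; exact h1

lemma sum_cells (F : ℝ → ℝ≥0∞) (m : ℤ) (k : ℕ) (B : ℝ≥0∞)
    (h : ∀ p : ℤ, m ≤ p → ∫⁻ t in Ico (p:ℝ) ((p:ℝ) + 1), F t ≤ B) :
    ∫⁻ t in Ico (m:ℝ) ((m:ℝ) + k), F t ≤ k * B := by
  induction k with
  | zero => simp
  | succ k ih =>
    have hsplit : Ico (m:ℝ) ((m:ℝ) + (k + 1 : ℕ))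
        = Ico (m:ℝ) ((m:ℝ) + k) ∪ Ico ((m:ℝ) + k) ((m:ℝ) + k + 1) := by
      push_cast
      rw [Ico_union_Ico_eq_Ico (le_add_of_nonneg_right (Nat.cast_nonneg k)) (by linarith)]
      ring_nf
    rw [hsplit]
    refine le_trans (lintegral_union_le _ _ _) ?_
    have h2 : ∫⁻ t in Ico ((m:ℝ) + k) ((m:ℝ) + k + 1), F t ≤ B := by
      have := h (m + k) (le_add_of_nonneg_right (Int.ofNat_nonneg k))
      push_cast at this
      convert this using 3 <;> ring
    refine le_trans (add_le_add ih h2) (le_of_eq ?_)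
    push_cast; rw [add_mul, one_mul]


lemma map_eval_restrict {N : ℕ} (I : Fin N → Set ℝ) (hI : ∀ i, MeasurableSet (I i)) (j : Fin N) :
    Measure.map (fun y => y j)
      ((Measure.pi fun _ => (volume : Measure ℝ)).restrict (univ.pi I))
    = (∏ i ∈ Finset.univ.erase j, volume (I i)) • (volume.restrict (I j)) := by
  ext A hA
  rw [Measure.map_apply (measurable_pi_apply j) hA,
    Measure.restrict_apply (hA.preimage (measurable_pi_apply j))]
  have hset : ((fun y : Fin N → ℝ => y j) ⁻¹' A) ∩ (univ.pi I)
      = univ.pi (Function.update I j (I j ∩ A)) := by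
    ext y
    simp only [mem_inter_iff, mem_preimage, mem_univ_pi]
    constructor
    · rintro ⟨hyA, hyI⟩ i
      rcases eq_or_ne i j with rfl | hij
      · rw [Function.update_self]; exact ⟨hyI i, hyA⟩
      · rw [Function.update_of_ne hij]; exact hyI i
    · intro hy
      have hj := hy j
      rw [Function.update_self] at hj
      refine ⟨hj.2, fun i => ?_⟩
      rcases eq_or_ne i j with rfl | hij
      · exact hj.1
      · have := hy i; rwa [Function.update_of_ne hij] at this
  rw [hset, Measure.pi_pi, Measure.smul_apply, Measure.restrict_apply' (hI j), smul_eq_mul,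
    ← Finset.prod_erase_mul _ _ (Finset.mem_univ j), Function.update_self]
  rw [Finset.prod_congr rfl fun i hi => by
    rw [Function.update_of_ne (Finset.ne_of_mem_erase hi)]]
  rw [Set.inter_comm]

lemma box_lintegral {N : ℕ} (f : ℝ → ℝ≥0∞) (hf : Measurable f) (I : Fin N → Set ℝ)
    (hI : ∀ i, MeasurableSet (I i)) (j : Fin N) :
    ∫⁻ y in {y : EuclideanSpace ℝ (Fin N) | ∀ i, y i ∈ I i}, f (y j)
      = (∏ i ∈ Finset.univ.erase j, volume (I i)) * ∫⁻ t in I j, f t := by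
  have e := EuclideanSpace.volume_preserving_symm_measurableEquiv_toLp (Fin N)
  have hpre : (⇑((MeasurableEquiv.toLp 2 (Fin N → ℝ)).symm)) ⁻¹' (univ.pi I)
      = {y : EuclideanSpace ℝ (Fin N) | ∀ i, y i ∈ I i} := by
    ext y; simp [Set.mem_univ_pi]
  have h1 := e.setLIntegral_comp_preimage (MeasurableSet.univ_pi hI)
    (f := fun z : Fin N → ℝ => f (z j)) (hf.comp (measurable_pi_apply j))
  rw [hpre] at h1
  rw [show (fun y : EuclideanSpace ℝ (Fin N) => f (y j))
      = fun y => f (((MeasurableEquiv.toLp 2 (Fin N → ℝ)).symm) y j) from rfl] at *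
  rw [h1]
  rw [← lintegral_map hf (measurable_pi_apply j), volume_pi, map_eval_restrict I hI j,
    lintegral_smul_measure, smul_eq_mul]


lemma coord_dist_le {N : ℕ} (x y : EuclideanSpace ℝ (Fin N)) (i : Fin N) :
    |y i - x i| ≤ dist y x := by
  rw [EuclideanSpace.dist_eq]
  calc |y i - x i| = Real.sqrt (dist (y i) (x i) ^ 2) := by
        rw [Real.sqrt_sq_eq_abs, Real.dist_eq, abs_abs]
    _ ≤ Real.sqrt (∑ i', dist (y i') (x i') ^ 2) :=
        Real.sqrt_le_sqrt (Finset.single_le_sum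
          (f := fun i' => dist (y i') (x i') ^ 2) (fun i' _ => sq_nonneg _) (Finset.mem_univ i))

lemma ball_subset_box {N : ℕ} (x : EuclideanSpace ℝ (Fin N)) (ρ : ℝ) :
    ball x ρ ⊆ {y | ∀ i, y i ∈ Icc (x i - ρ) (x i + ρ)} := by
  intro y hy i
  have hd : dist y x < ρ := mem_ball.1 hy
  have h1 := coord_dist_le x y i
  have := abs_le.1 (le_of_lt (lt_of_le_of_lt h1 hd))
  exact ⟨by linarith [this.1], by linarith [this.2]⟩

lemma box_subset_ball {N : ℕ} (x : EuclideanSpace ℝ (Fin N)) :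
    {y : EuclideanSpace ℝ (Fin N) | ∀ i, y i ∈ Icc (x i - 3) (x i + 3)}
      ⊆ ball x (3 * Real.sqrt N + 1) := by
  intro y hy
  rw [mem_ball, EuclideanSpace.dist_eq]
  have hsum : ∑ i, dist (y i) (x i) ^ 2 ≤ (N : ℝ) * 9 := by
    calc ∑ i, dist (y i) (x i) ^ 2 ≤ ∑ _i : Fin N, (9:ℝ) := by
          refine Finset.sum_le_sum fun i _ => ?_
          have h := hy i
          rw [Real.dist_eq]
          have h1 : |y i - x i| ≤ 3 := abs_le.2 ⟨by linarith [h.1], by linarith [h.2]⟩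
          calc |y i - x i| ^ 2 ≤ 3 ^ 2 := by
                have := abs_nonneg (y i - x i); nlinarith
            _ = 9 := by norm_num
      _ = (N : ℝ) * 9 := by rw [Finset.sum_const, Finset.card_univ, Fintype.card_fin]; simp
  have hs : Real.sqrt (∑ i, dist (y i) (x i) ^ 2) ≤ 3 * Real.sqrt N := by
    calc Real.sqrt (∑ i, dist (y i) (x i) ^ 2) ≤ Real.sqrt ((N:ℝ) * 9) :=
          Real.sqrt_le_sqrt hsum
      _ = 3 * Real.sqrt N := by
          rw [show ((N:ℝ) * 9) = (3 * Real.sqrt N) ^ 2 by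
            rw [mul_pow, Real.sq_sqrt (Nat.cast_nonneg N)]; ring]
          rw [Real.sqrt_sq (by positivity)]
  linarith


theorem stmt10 {N : ℕ} (hN : 1 ≤ N) :
    ∃ V : EuclideanSpace ℝ (Fin N) → ℝ, Measurable V ∧ (∀ x, 0 ≤ V x) ∧
      locUnifNorm 1 V < ⊤ ∧
      ∃ r₀ : ℝ, 0 < r₀ ∧
        (∀ x : EuclideanSpace ℝ (Fin N),
            1 ≤ ∫⁻ y in ball x r₀, ENNReal.ofReal (V y)) ∧
        ∀ M : ℝ, 0 < M → ∀ r : ℝ, 0 < r →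
          (⨅ x : EuclideanSpace ℝ (Fin N),
              ∫⁻ y in ball x r, ENNReal.ofReal (trunc M V y)) = 0 := by
  classical
  have hN0 : 0 < N := hN
  let j : Fin N := ⟨0, hN0⟩
  have hVmeas : Measurable (fun y : EuclideanSpace ℝ (Fin N) => gg (y j)) :=
    gg_meas.comp ((measurable_pi_apply j).comp
      ((MeasurableEquiv.toLp 2 (Fin N → ℝ)).symm).measurable)
  refine ⟨fun y => gg (y j), hVmeas, fun y => gg_nonneg _, ?_, ?_⟩
  · -- locUnifNorm < ⊤
    have hbound : ∀ x₀ : EuclideanSpace ℝ (Fin N),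
        eLpNorm (fun y => gg (y j)) (ENNReal.ofReal 1) (volume.restrict (ball x₀ 1))
          ≤ (ENNReal.ofReal 2) ^ (Finset.univ.erase j).card * 3 := by
      intro x₀
      rw [ENNReal.ofReal_one, eLpNorm_one_eq_lintegral_enorm]
      have h1 : ∫⁻ y in ball x₀ 1, ‖gg (y j)‖ₑ
          = ∫⁻ y in ball x₀ 1, ENNReal.ofReal (gg (y j)) :=
        lintegral_congr fun y => Real.enorm_eq_ofReal (gg_nonneg _)
      rw [h1]
      refine le_trans (lintegral_mono_set (ball_subset_box x₀ 1)) ?_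
      rw [box_lintegral (fun t => ENNReal.ofReal (gg t)) gg_meas.ennreal_ofReal
        (fun i => Icc (x₀ i - 1) (x₀ i + 1)) (fun i => measurableSet_Icc) j]
      refine mul_le_mul' (le_of_eq ?_) ?_
      · rw [Finset.prod_congr rfl fun i _ => by
          rw [Real.volume_Icc, show x₀ i + 1 - (x₀ i - 1) = 2 by ring]]
        rw [Finset.prod_const]
      · have hsub : Icc (x₀ j - 1) (x₀ j + 1)
            ⊆ Ico ((⌊x₀ j - 1⌋ : ℝ)) ((⌊x₀ j - 1⌋ : ℝ) + (3:ℕ)) := by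
          intro t ht
          have h1 : ((⌊x₀ j - 1⌋ : ℤ) : ℝ) ≤ x₀ j - 1 := Int.floor_le _
          have h2 : x₀ j - 1 < ((⌊x₀ j - 1⌋ : ℤ) : ℝ) + 1 := Int.lt_floor_add_one _
          exact ⟨by linarith [ht.1], by push_cast; linarith [ht.2]⟩
        refine le_trans (lintegral_mono_set hsub) ?_
        have := sum_cells (fun t => ENNReal.ofReal (gg t)) (⌊x₀ j - 1⌋) 3 1
          (fun p _ => cell_le_one p)
        simpa using this
    rw [locUnifNorm]
    refine lt_of_le_of_lt (iSup_le hbound) ?_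
    exact ENNReal.mul_lt_top
      (ENNReal.pow_lt_top ENNReal.ofReal_lt_top) (by norm_num)
  · refine ⟨3 * Real.sqrt N + 1, ?_, ?_, ?_⟩
    · have : (0:ℝ) ≤ Real.sqrt N := Real.sqrt_nonneg _
      linarith
    · -- lower bound on every ball
      intro x
      have hbox := box_lintegral (fun t => ENNReal.ofReal (gg t)) gg_meas.ennreal_ofReal
        (fun i => Icc (x i - 3) (x i + 3)) (fun i => measurableSet_Icc) j
      have hsub2 : Ico ((⌈x j - 3⌉ : ℝ)) ((⌈x j - 3⌉ : ℝ) + dd ⌈x j - 3⌉)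
          ⊆ Icc (x j - 3) (x j + 3) := by
        intro t ht
        have h1 : x j - 3 ≤ ((⌈x j - 3⌉ : ℤ) : ℝ) := Int.le_ceil _
        have h2 : ((⌈x j - 3⌉ : ℤ) : ℝ) < (x j - 3) + 1 := Int.ceil_lt_add_one _
        exact ⟨le_trans h1 ht.1, by linarith [ht.2, dd_le_one ⌈x j - 3⌉]⟩
      have hint : 1 ≤ ∫⁻ t in Icc (x j - 3) (x j + 3), ENNReal.ofReal (gg t) := by
        rw [← slab_lintegral ⌈x j - 3⌉]
        exact lintegral_mono_set hsub2
      have hprod : 1 ≤ ∏ i ∈ Finset.univ.erase j, volume (Icc (x i - 3) (x i + 3)) := by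
        refine Finset.one_le_prod' fun i _ => ?_
        rw [Real.volume_Icc, show x i + 3 - (x i - 3) = 6 by ring]
        exact ENNReal.one_le_ofReal.2 (by norm_num)
      calc (1:ℝ≥0∞) = 1 * 1 := (one_mul 1).symm
        _ ≤ (∏ i ∈ Finset.univ.erase j, volume (Icc (x i - 3) (x i + 3)))
            * ∫⁻ t in Icc (x j - 3) (x j + 3), ENNReal.ofReal (gg t) :=
          mul_le_mul' hprod hint
        _ = ∫⁻ y in {y : EuclideanSpace ℝ (Fin N) | ∀ i, y i ∈ Icc (x i - 3) (x i + 3)},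
              ENNReal.ofReal (gg (y j)) := hbox.symm
        _ ≤ ∫⁻ y in ball x (3 * Real.sqrt N + 1), ENNReal.ofReal (gg (y j)) :=
          lintegral_mono_set (box_subset_ball x)
    · -- truncation
      intro M hM r hr
      have htr : ∀ y : EuclideanSpace ℝ (Fin N),
          ENNReal.ofReal (trunc M (fun y => gg (y j)) y)
            = ENNReal.ofReal (min (gg (y j)) M) := by
        intro y
        simp only [trunc]
        congr 1
        exact max_eq_right (le_min (by linarith [gg_nonneg (y j)]) (by linarith))
      set k : ℕ := ⌈2 * r⌉₊ + 1 with hk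
      set P : ℝ≥0∞ := (ENNReal.ofReal (2*r)) ^ (Finset.univ.erase j).card with hP
      set D : ℝ≥0∞ := P * (k * ENNReal.ofReal M) with hD
      have hDne : D ≠ ⊤ := by
        rw [hD, hP]
        exact ENNReal.mul_ne_top (ENNReal.pow_ne_top ENNReal.ofReal_ne_top)
          (ENNReal.mul_ne_top (ENNReal.natCast_ne_top k) ENNReal.ofReal_ne_top)
      have hbnd : ∀ n : ℕ,
          (⨅ x : EuclideanSpace ℝ (Fin N),
              ∫⁻ y in ball x r, ENNReal.ofReal (trunc M (fun y => gg (y j)) y))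
            ≤ D * ENNReal.ofReal (1 / ((n:ℝ) + 1)) := by
        intro n
        set x : EuclideanSpace ℝ (Fin N) := EuclideanSpace.single j ((n:ℝ) + 1 + r) with hx
        have hxj : x j = (n:ℝ) + 1 + r := by
          rw [hx, EuclideanSpace.single_apply, if_pos rfl]
        refine le_trans (iInf_le _ x) ?_
        have h0 : ∫⁻ y in ball x r, ENNReal.ofReal (trunc M (fun y => gg (y j)) y)
            = ∫⁻ y in ball x r, ENNReal.ofReal (min (gg (y j)) M) :=
          lintegral_congr fun y => htr y
        rw [h0]
        refine le_trans (lintegral_mono_set (ball_subset_box x r)) ?_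
        rw [box_lintegral (fun t => ENNReal.ofReal (min (gg t) M))
          ((gg_meas.min measurable_const).ennreal_ofReal)
          (fun i => Icc (x i - r) (x i + r)) (fun i => measurableSet_Icc) j]
        have hprodP : ∏ i ∈ Finset.univ.erase j, volume (Icc (x i - r) (x i + r)) = P := by
          rw [Finset.prod_congr rfl fun i _ => by
            rw [Real.volume_Icc, show x i + r - (x i - r) = 2*r by ring]]
          rw [Finset.prod_const]
        rw [hprodP]
        have hcell : ∀ p : ℤ, ((n:ℤ) + 1) ≤ p →
            ∫⁻ t in Ico (p:ℝ) ((p:ℝ) + 1), ENNReal.ofReal (min (gg t) M)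
              ≤ ENNReal.ofReal M * ENNReal.ofReal (1 / ((n:ℝ) + 1)) := by
          intro p hp
          refine le_trans (cell_trunc p M hM) (mul_le_mul_right ?_ _)
          apply ENNReal.ofReal_le_ofReal
          rw [dd]
          apply one_div_le_one_div_of_le (by positivity)
          have hp' : ((n:ℝ) + 1) ≤ (p:ℝ) := by exact_mod_cast hp
          have habs : (p:ℝ) ≤ |(p:ℝ)| := le_abs_self _
          linarith
        have hcells := sum_cells (fun t => ENNReal.ofReal (min (gg t) M)) ((n:ℤ) + 1) k
          (ENNReal.ofReal M * ENNReal.ofReal (1 / ((n:ℝ) + 1))) hcell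
        have hsub : Icc (x j - r) (x j + r)
            ⊆ Ico ((((n:ℤ) + 1 : ℤ)):ℝ) (((((n:ℤ) + 1 : ℤ)):ℝ) + k) := by
          intro t ht
          rw [hxj] at ht
          have h2r : 2 * r < (k:ℝ) := by
            rw [hk]
            push_cast
            linarith [Nat.le_ceil (2*r)]
          constructor
          · push_cast; linarith [ht.1]
          · push_cast at h2r ⊢; linarith [ht.2]
        refine le_trans (mul_le_mul_right
          (le_trans (lintegral_mono_set hsub) hcells) P) (le_of_eq ?_)
        rw [hD]
        ring
      have htend : Tendsto (fun n : ℕ => D * ENNReal.ofReal (1 / ((n:ℝ) + 1)))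
          atTop (nhds 0) := by
        have h1 : Tendsto (fun n : ℕ => ENNReal.ofReal (1 / ((n:ℝ) + 1)))
            atTop (nhds 0) := by
          have := ENNReal.tendsto_ofReal
            (f := atTop) (tendsto_one_div_add_atTop_nhds_zero_nat)
          simpa using this
        have := ENNReal.Tendsto.const_mul h1 (Or.inr hDne)
        simpa using this
      exact le_antisymm (ge_of_tendsto' htend hbnd) zero_le
end

section
/- Let X be a Banach space and let T : [0,∞) → 𝓛(X) be a family of continuous linear operators with ‖T(t)‖_{𝓛(X)} = 1 for every t ≥ 0. Let g : [0,∞) → (0,1] be continuous with lim_{t→∞} g(t) = 0. Then there exists u₀ ∈ X such that limsup_{t→∞} ‖T(t)u₀‖ / g(t) = ∞. -/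
open Filter

theorem stmt12 {X : Type*} [NormedAddCommGroup X] [NormedSpace ℝ X] [CompleteSpace X]
    (T : ℝ → X →L[ℝ] X) (hT : ∀ t ≥ (0 : ℝ), ‖T t‖ = 1)
    (g : ℝ → ℝ) (hg_cont : ContinuousOn g (Set.Ici 0))
    (hg_pos : ∀ t ≥ (0 : ℝ), 0 < g t ∧ g t ≤ 1)
    (hg_lim : Tendsto g atTop (nhds 0)) :
    ∃ u₀ : X,
      Filter.limsup (fun t : ℝ => ENNReal.ofReal (‖T t u₀‖ / g t)) atTop = ⊤ := by
  by_contra h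
  push_neg at h
  set A : ℕ → X →L[ℝ] X := fun n => (g n)⁻¹ • T n with hA
  have hgn_pos : ∀ n : ℕ, 0 < g n := fun n => (hg_pos n (Nat.cast_nonneg n)).1
  have hAx : ∀ (n : ℕ) (x : X), ‖A n x‖ = ‖T (n : ℝ) x‖ / g n := by
    intro n x
    have : A n x = (g n)⁻¹ • T (n : ℝ) x := rfl
    rw [this, norm_smul, Real.norm_eq_abs, abs_of_pos (inv_pos.mpr (hgn_pos n)),
      inv_mul_eq_div]
  have hbd : ∀ x : X, ∃ C, ∀ n, ‖A n x‖ ≤ C := by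
    intro x
    have hL := h x
    set L := limsup (fun t : ℝ => ENNReal.ofReal (‖T t x‖ / g t)) atTop with hLdef
    have hlt : L < L + 1 := ENNReal.lt_add_right hL one_ne_zero
    have hev := Filter.eventually_lt_of_limsup_lt hlt
    have hne : L + 1 ≠ ⊤ := ENNReal.add_ne_top.mpr ⟨hL, ENNReal.one_ne_top⟩
    set c := (L + 1).toReal with hc
    have hev2 : ∀ᶠ t : ℝ in atTop, ‖T t x‖ / g t ≤ c := by
      filter_upwards [hev, Filter.eventually_ge_atTop (0 : ℝ)] with t ht ht0
      have h0 : 0 ≤ ‖T t x‖ / g t := div_nonneg (norm_nonneg _) (hg_pos t ht0).1.le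
      exact ((ENNReal.ofReal_lt_iff_lt_toReal h0 hne).mp ht).le
    have hev3 : ∀ᶠ n : ℕ in atTop, ‖A n x‖ ≤ c := by
      filter_upwards [tendsto_natCast_atTop_atTop.eventually hev2] with n hn
      rw [hAx]; exact hn
    obtain ⟨N, hN⟩ := hev3.exists_forall_of_atTop
    refine ⟨max c (∑ i ∈ Finset.range N, ‖A i x‖), fun n => ?_⟩
    rcases lt_or_ge n N with hn | hn
    · exact le_max_of_le_right
        (Finset.single_le_sum (fun i _ => norm_nonneg (A i x)) (Finset.mem_range.mpr hn))
    · exact le_max_of_le_left (hN n hn)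
  obtain ⟨C', hC'⟩ := banach_steinhaus hbd
  have hAn : ∀ n : ℕ, ‖A n‖ = (g n)⁻¹ := by
    intro n
    have : ‖A n‖ = ‖(g ↑n)⁻¹‖ * ‖T (n : ℝ)‖ := norm_smul ((g (n:ℝ))⁻¹) (T (n:ℝ))
    rw [this, hT _ (Nat.cast_nonneg n), Real.norm_eq_abs,
      abs_of_pos (inv_pos.mpr (hgn_pos n)), mul_one]
  have hC'pos : 0 < C' := lt_of_lt_of_le (by rw [hAn 0]; exact inv_pos.mpr (hgn_pos 0)) (hC' 0)
  have htend : Tendsto (fun n : ℕ => g n) atTop (nhds 0) :=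
    hg_lim.comp tendsto_natCast_atTop_atTop
  have hev : ∀ᶠ n : ℕ in atTop, g n < (C' + 1)⁻¹ :=
    htend.eventually_lt_const (inv_pos.mpr (by linarith))
  obtain ⟨n, hn⟩ := hev.exists
  have h1 : C' + 1 < (g n)⁻¹ := by
    rw [← inv_inv (C' + 1)]
    exact inv_strictAnti₀ (hgn_pos n) hn
  have h2 : (g n)⁻¹ ≤ C' := by rw [← hAn n]; exact hC' n
  linarith
end

section
/- Let N ≥ 1, 1 ≤ p₀ < ∞, and t > 0. There exists a constant C > 0, depending only on N, p₀ and t, such that for every measurable V : ℝ^N → ℝ with ‖V‖_{L^{p₀}_U(ℝ^N)} < ∞ and every x ∈ ℝ^N, ∫_{ℝ^N} (4πt)^{−N/2} e^{−|x−y|²/(4t)} |V(y)| dy ≤ C ‖V‖_{L^{p₀}_U(ℝ^N)}. In particular, the Gaussian (heat) convolution of any function in L^{p₀}_U(ℝ^N) at any positive time is a bounded function on ℝ^N. -/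
open MeasureTheory Metric Filter ENNReal

lemma gauss_lintegral_lt_top {N : ℕ} {b : ℝ} (hb : 0 < b) :
    ∫⁻ w : EuclideanSpace ℝ (Fin N), ENNReal.ofReal (Real.exp (-b * ‖w‖ ^ 2)) < ⊤ := by
  have hi : Integrable (fun v : EuclideanSpace ℝ (Fin N) => Real.exp (-b * ‖v‖ ^ 2)) := by
    have h := (GaussianFourier.integrable_cexp_neg_mul_sq_norm_add
      (V := EuclideanSpace ℝ (Fin N)) (b := (b : ℂ)) (by simpa using hb) 0 0).norm
    apply h.congr
    filter_upwards with v
    have hz : (-(b:ℂ) * (‖v‖:ℂ) ^ 2 + 0 * ((inner ℝ (0 : EuclideanSpace ℝ (Fin N)) v : ℝ) : ℂ))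
        = ((-b * ‖v‖ ^ 2 : ℝ) : ℂ) := by push_cast; ring
    rw [hz, Complex.norm_exp, Complex.ofReal_re]
  have h2 := hi.hasFiniteIntegral
  rw [HasFiniteIntegral] at h2
  refine lt_of_le_of_lt (lintegral_mono fun w => ?_) h2
  rw [← ofReal_norm_eq_enorm, Real.norm_eq_abs, abs_of_nonneg (Real.exp_nonneg _)]

set_option maxHeartbeats 1000000 in
theorem stmt17 {N : ℕ} (hN : 1 ≤ N) {p₀ : ℝ} (hp : 1 ≤ p₀) {t : ℝ} (ht : 0 < t) :
    ∃ C : ℝ, 0 < C ∧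
      ∀ V : EuclideanSpace ℝ (Fin N) → ℝ, Measurable V → locUnifNorm p₀ V < ⊤ →
        ∀ x : EuclideanSpace ℝ (Fin N),
          (∫⁻ y : EuclideanSpace ℝ (Fin N),
              ENNReal.ofReal ((4 * Real.pi * t) ^ (-(N : ℝ) / 2) *
                Real.exp (-‖x - y‖ ^ 2 / (4 * t)) * |V y|)) ≤
            ENNReal.ofReal C * locUnifNorm p₀ V := by
  set E := EuclideanSpace ℝ (Fin N) with hEdef
  have ht4 : (0:ℝ) < 4 * t := by linarith
  have h16 : (0:ℝ) < 16 * t := by linarith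
  -- basic constants
  set b₁ : ℝ≥0∞ := volume (ball (0 : E) 1) with hb₁def
  have hb₁0 : b₁ ≠ 0 := (measure_ball_pos volume (0 : E) one_pos).ne'
  have hb₁top : b₁ ≠ ⊤ := measure_ball_lt_top.ne
  set M : ℝ≥0∞ := b₁ ^ (1 - 1 / p₀) with hMdef
  have hM_top : M ≠ ⊤ := by
    refine (ENNReal.rpow_lt_top_of_nonneg ?_ hb₁top).ne
    have h1 : 1 / p₀ ≤ 1 := by
      rw [div_le_one (by linarith)]; linarith
    linarith
  -- the enlarged kernel
  set g : E → ℝ≥0∞ := fun w =>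
    ENNReal.ofReal (Real.exp (-(max (‖w‖ - 1) 0) ^ 2 / (4 * t))) with hgdef
  have hgmeas : Measurable g := by
    apply Measurable.ennreal_ofReal
    exact (Real.continuous_exp.comp
      ((((continuous_norm.sub continuous_const).max continuous_const).pow 2).neg.div_const
        (4 * t))).measurable
  set K : ℝ≥0∞ := ∫⁻ w : E, g w with hKdef
  have hK_top : K ≠ ⊤ := by
    have hbd : ∀ w : E, g w ≤
        ENNReal.ofReal (Real.exp (1 / (4 * t))) *
          ENNReal.ofReal (Real.exp (-(1 / (16 * t)) * ‖w‖ ^ 2)) := by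
      intro w
      simp only [hgdef]
      rw [← ENNReal.ofReal_mul (Real.exp_nonneg _), ← Real.exp_add]
      apply ENNReal.ofReal_le_ofReal
      apply Real.exp_le_exp.2
      have hw : 0 ≤ ‖w‖ := norm_nonneg w
      have hB : -(1 / (16 * t)) * ‖w‖ ^ 2 = -(‖w‖ ^ 2 / (16 * t)) := by ring
      rw [hB]
      rcases le_or_gt ‖w‖ 2 with h2 | h2
      · have hkey : ‖w‖ ^ 2 / (16 * t) ≤ 1 / (4 * t) := by
          have hA : ‖w‖ ^ 2 ≤ 4 := by nlinarith
          rw [div_le_div_iff₀ h16 ht4]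
          nlinarith [mul_le_mul_of_nonneg_right hA ht4.le]
        have h0 : -(max (‖w‖ - 1) 0) ^ 2 / (4 * t) ≤ 0 := by
          apply div_nonpos_of_nonpos_of_nonneg _ (by linarith)
          simp [sq_nonneg]
        linarith
      · have hmax : max (‖w‖ - 1) 0 = ‖w‖ - 1 := max_eq_left (by linarith)
        rw [hmax]
        have hkey : ‖w‖ ^ 2 / (16 * t) ≤ (‖w‖ - 1) ^ 2 / (4 * t) + 1 / (4 * t) := by
          have hA : ‖w‖ ^ 2 ≤ 4 * ((‖w‖ - 1) ^ 2 + 1) := by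
            nlinarith [sq_nonneg (3 * ‖w‖ - 4)]
          rw [← add_div, div_le_div_iff₀ h16 ht4]
          nlinarith [mul_le_mul_of_nonneg_right hA ht4.le]
        have hng : -(‖w‖ - 1) ^ 2 / (4 * t) = -((‖w‖ - 1) ^ 2 / (4 * t)) := by ring
        linarith [hng.le, hng.ge]
    have hle : K ≤ ENNReal.ofReal (Real.exp (1 / (4 * t))) *
        ∫⁻ w : E, ENNReal.ofReal (Real.exp (-(1 / (16 * t)) * ‖w‖ ^ 2)) := by
      rw [hKdef, ← lintegral_const_mul' _ _ ENNReal.ofReal_ne_top]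
      exact lintegral_mono hbd
    exact (lt_of_le_of_lt hle (ENNReal.mul_lt_top ENNReal.ofReal_lt_top
      (gauss_lintegral_lt_top (by positivity)))).ne
  -- the constant
  set a : ℝ := (4 * Real.pi * t) ^ (-(N : ℝ) / 2) with hadef
  have ha0 : 0 < a := Real.rpow_pos_of_pos (by positivity) _
  set D : ℝ≥0∞ := ENNReal.ofReal a * (K * M / b₁) with hDdef
  have hD_top : D ≠ ⊤ := by
    apply ENNReal.mul_ne_top ENNReal.ofReal_ne_top
    rw [ENNReal.div_eq_inv_mul]
    exact ENNReal.mul_ne_top (ENNReal.inv_ne_top.2 hb₁0)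
      (ENNReal.mul_ne_top hK_top hM_top)
  refine ⟨D.toReal + 1, by positivity, ?_⟩
  intro V hV hVfin x
  set L : ℝ≥0∞ := locUnifNorm p₀ V with hLdef
  set e : E → ℝ≥0∞ := fun y =>
    ENNReal.ofReal (Real.exp (-‖x - y‖ ^ 2 / (4 * t)) * |V y|) with hedef
  have hemeas : Measurable e := by
    apply Measurable.ennreal_ofReal
    apply Measurable.mul
    · exact (Real.continuous_exp.comp
        ((((continuous_const.sub continuous_id).norm.pow 2).neg.div_const (4 * t)))).measurable
    · exact hV.abs
  set I : ℝ≥0∞ := ∫⁻ y : E, e y with hIdef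
  -- Step 0 : rewrite the LHS
  have step0 : (∫⁻ y : E,
      ENNReal.ofReal ((4 * Real.pi * t) ^ (-(N : ℝ) / 2) *
        Real.exp (-‖x - y‖ ^ 2 / (4 * t)) * |V y|)) = ENNReal.ofReal a * I := by
    rw [hIdef, ← lintegral_const_mul' _ _ ENNReal.ofReal_ne_top]
    congr 1 with y
    simp only [hedef, hadef]
    rw [← ENNReal.ofReal_mul ha0.le, mul_assoc]
  -- the doubled function
  set F : E → E → ℝ≥0∞ := fun z y =>
    e y * Set.indicator {q : E × E | dist q.1 q.2 < 1} (fun _ => (1:ℝ≥0∞)) (z, y)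
    with hFdef
  have hSmeas : MeasurableSet {q : E × E | dist q.1 q.2 < 1} :=
    (isOpen_lt (continuous_fst.dist continuous_snd) continuous_const).measurableSet
  -- Step 1 : Fubini gives ∫ z, ∫_{B(z,1)} e = I * b₁
  have step1 : ∫⁻ z : E, ∫⁻ y in ball z 1, e y = I * b₁ := by
    have h1 : ∀ z : E, ∫⁻ y in ball z 1, e y = ∫⁻ y, F z y := by
      intro z
      rw [← lintegral_indicator measurableSet_ball]
      congr 1 with y
      simp only [hFdef]
      by_cases hy : dist z y < 1
      · have hy' : y ∈ ball z 1 := by rwa [mem_ball, dist_comm]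
        rw [Set.indicator_of_mem hy' e, Set.indicator_of_mem (by exact hy), mul_one]
      · have hy' : y ∉ ball z 1 := by rwa [mem_ball, dist_comm]
        rw [Set.indicator_of_notMem hy' e, Set.indicator_of_notMem (by exact hy), mul_zero]
    have hswap : ∫⁻ z : E, ∫⁻ y, F z y = ∫⁻ y : E, ∫⁻ z, F z y := by
      apply lintegral_lintegral_swap
      apply Measurable.aemeasurable
      have huncurry : (Function.uncurry F) = fun q : E × E =>
          e q.2 * Set.indicator {q : E × E | dist q.1 q.2 < 1} (fun _ => (1:ℝ≥0∞)) q := by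
        ext ⟨z, y⟩; rfl
      rw [huncurry]
      exact (hemeas.comp measurable_snd).mul ((measurable_const).indicator hSmeas)
    have h2 : ∀ y : E, ∫⁻ z, F z y = e y * b₁ := by
      intro y
      have hz : ∀ z : E, F z y = e y * Set.indicator (ball y 1) (fun _ => (1:ℝ≥0∞)) z := by
        intro z
        simp only [hFdef]
        by_cases hzy : dist z y < 1
        · rw [Set.indicator_of_mem (by exact hzy),
            Set.indicator_of_mem (by rwa [mem_ball])]
        · rw [Set.indicator_of_notMem (by exact hzy),
            Set.indicator_of_notMem (by rwa [mem_ball])]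
      simp_rw [hz]
      rw [lintegral_const_mul' _ _ ENNReal.ofReal_ne_top]
      simp only [lintegral_indicator measurableSet_ball, setLIntegral_one]
      rw [Measure.addHaar_ball_center volume y 1]
    simp_rw [h1, hswap, h2]
    rw [lintegral_mul_const' _ _ hb₁top, hIdef]
  -- Step 2 : inner bound
  have step2 : ∀ z : E, ∫⁻ y in ball z 1, e y ≤ g (x - z) * (M * L) := by
    intro z
    have hptwise : ∀ y ∈ ball z 1, e y ≤ g (x - z) * ENNReal.ofReal |V y| := by
      intro y hy
      simp only [hedef, hgdef]
      rw [ENNReal.ofReal_mul (Real.exp_nonneg _)]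
      apply mul_le_mul_left
      apply ENNReal.ofReal_le_ofReal
      apply Real.exp_le_exp.2
      have hzy : ‖y - z‖ < 1 := by rwa [mem_ball, dist_eq_norm] at hy
      have htri : ‖x - z‖ ≤ ‖x - y‖ + ‖y - z‖ := norm_sub_le_norm_sub_add_norm_sub x y z
      have hle : max (‖x - z‖ - 1) 0 ≤ ‖x - y‖ :=
        max_le (by linarith) (norm_nonneg _)
      have hsq : (max (‖x - z‖ - 1) 0) ^ 2 ≤ ‖x - y‖ ^ 2 :=
        pow_le_pow_left₀ (le_max_right _ 0) hle 2
      exact (div_le_div_iff_of_pos_right ht4).2 (neg_le_neg hsq)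
    calc ∫⁻ y in ball z 1, e y
        ≤ ∫⁻ y in ball z 1, g (x - z) * ENNReal.ofReal |V y| :=
          setLIntegral_mono (measurable_const.mul hV.abs.ennreal_ofReal) hptwise
      _ = g (x - z) * ∫⁻ y in ball z 1, ENNReal.ofReal |V y| :=
          lintegral_const_mul' _ _ ENNReal.ofReal_ne_top
      _ ≤ g (x - z) * (M * L) := by
          apply mul_le_mul_right
          have h1 : ∫⁻ y in ball z 1, ENNReal.ofReal |V y|
              = eLpNorm V 1 (volume.restrict (ball z 1)) := by
            rw [eLpNorm_one_eq_lintegral_enorm]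
            congr 1 with y
            rw [Real.enorm_eq_ofReal_abs]
          rw [h1]
          have h2 := eLpNorm_le_eLpNorm_mul_rpow_measure_univ
            (p := 1) (q := ENNReal.ofReal p₀)
            (μ := volume.restrict (ball z 1)) (f := V)
            (ENNReal.one_le_ofReal.2 hp) hV.aestronglyMeasurable
          rw [Measure.restrict_apply_univ] at h2
          refine h2.trans ?_
          rw [mul_comm]
          apply mul_le_mul'
          · apply le_of_eq
            rw [hMdef]
            congr 1
            · rw [hb₁def]; exact Measure.addHaar_ball_center volume z 1
            · rw [ENNReal.toReal_one, ENNReal.toReal_ofReal (by linarith)]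
              norm_num
          · rw [hLdef]
            exact le_iSup (fun x₀ : E =>
              eLpNorm V (ENNReal.ofReal p₀) (volume.restrict (ball x₀ 1))) z
  -- Step 3 : integrate in z
  have step3 : ∫⁻ z : E, g (x - z) * (M * L) = K * (M * L) := by
    have hgm : Measurable fun z : E => g (x - z) :=
      hgmeas.comp (measurable_const.sub measurable_id)
    rw [lintegral_mul_const _ hgm]
    congr 1
    rw [hKdef]
    have h1 : MeasurePreserving (fun z : E => -z) volume volume :=
      Measure.measurePreserving_neg _
    have h2 : MeasurePreserving (fun z : E => x + z) volume volume :=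
      measurePreserving_add_left _ x
    have h3 := (h2.comp h1).lintegral_comp hgmeas
    simp_rw [sub_eq_add_neg]
    exact h3
  -- combine
  have hIb : I * b₁ ≤ K * (M * L) := by
    rw [← step1, ← step3]
    exact lintegral_mono step2
  have hI : I ≤ K * M / b₁ * L := by
    have h := (ENNReal.le_div_iff_mul_le (Or.inl hb₁0) (Or.inl hb₁top)).2 hIb
    refine h.trans (le_of_eq ?_)
    rw [div_eq_mul_inv, div_eq_mul_inv, ← mul_assoc, mul_right_comm]
  have hDC : D ≤ ENNReal.ofReal (D.toReal + 1) := by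
    conv_lhs => rw [← ENNReal.ofReal_toReal hD_top]
    exact ENNReal.ofReal_le_ofReal (by linarith)
  calc (∫⁻ y : E,
      ENNReal.ofReal ((4 * Real.pi * t) ^ (-(N : ℝ) / 2) *
        Real.exp (-‖x - y‖ ^ 2 / (4 * t)) * |V y|)) = ENNReal.ofReal a * I := step0
    _ ≤ ENNReal.ofReal a * (K * M / b₁ * L) := mul_le_mul_right hI _
    _ = D * L := by rw [hDdef, mul_assoc]
    _ ≤ ENNReal.ofReal (D.toReal + 1) * L := mul_le_mul_left hDC _
end
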